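/- arXiv:2201.01718 — 7 statements merged into one kernel-verified Lean document; each statement's English description precedes it below -/
import Mathlib

section
/- If L is a finite-dimensional Lie algebra over any field such that every subalgebra of L is an intersection of maximal subalgebras (i.e., L is dually atomistic), then L is abelian, almost abelian, or semisimple. -/
open LieAlgebra Module

section Preamble

variable (F : Type*) [Field F] (L : Type*) [LieRing L] [LieAlgebra F L]

/-- `pm` is a `p`-mapping making the Lie algebra `L` into a restricted Lie algebra. -/
structure IsPMapping (p : ℕ) (pm : L → L) : Prop where
  ad_pow : ∀ x y : L, ⁅pm x, y⁆ = ((LieAlgebra.ad F L x) ^ p) y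
  smul_pow : ∀ (c : F) (x : L), pm (c • x) = c ^ p • pm x
  add_pm : ∀ x y : L, pm (x + y) - pm x - pm y ∈ LieSubalgebra.lieSpan F L {x, y}

variable {L}

/-- A restricted subalgebra: a subalgebra closed under the `p`-mapping. -/
def IsPSub (pm : L → L) (S : LieSubalgebra F L) : Prop := ∀ x ∈ S, pm x ∈ S

/-- The restricted subalgebra generated by a set. -/
def pSpan (pm : L → L) (s : Set L) : LieSubalgebra F L :=
  sInf {S : LieSubalgebra F L | IsPSub F pm S ∧ s ⊆ S}

/-- A maximal restricted subalgebra. -/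
def IsMaxPSub (pm : L → L) (M : LieSubalgebra F L) : Prop :=
  IsPSub F pm M ∧ M ≠ ⊤ ∧ ∀ S : LieSubalgebra F L, IsPSub F pm S → M < S → S = ⊤

/-- `U` is a maximal (restricted) subalgebra of the restricted subalgebra `V`. -/
def IsMaxIn (pm : L → L) (U V : LieSubalgebra F L) : Prop :=
  U < V ∧ ∀ W : LieSubalgebra F L, IsPSub F pm W → U < W → W < V → False

/-- A restricted quasi-ideal. -/
def IsPQuasiIdeal (pm : L → L) (S : LieSubalgebra F L) : Prop :=
  IsPSub F pm S ∧ ∀ H : LieSubalgebra F L, IsPSub F pm H →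
    ∀ s ∈ S, ∀ h ∈ H, ⁅s, h⁆ ∈ S.toSubmodule ⊔ H.toSubmodule

/-- A `p`-nilpotent element. -/
def IsPNilpotentElt (pm : L → L) (x : L) : Prop := ∃ n : ℕ, 0 < n ∧ pm^[n] x = 0

variable (L)

/-- Every restricted subalgebra is an intersection of maximal restricted subalgebras. -/
def DuallyAtomisticP (pm : L → L) : Prop :=
  ∀ S : LieSubalgebra F L, IsPSub F pm S →
    ∃ 𝓜 : Set (LieSubalgebra F L), (∀ M ∈ 𝓜, IsMaxPSub F pm M) ∧ S = sInf 𝓜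

/-- Every (ordinary) subalgebra is an intersection of maximal (ordinary) subalgebras. -/
def DuallyAtomistic : Prop :=
  ∀ S : LieSubalgebra F L,
    ∃ 𝓜 : Set (LieSubalgebra F L),
      (∀ M ∈ 𝓜, M ≠ ⊤ ∧ ∀ S' : LieSubalgebra F L, M < S' → S' = ⊤) ∧ S = sInf 𝓜

/-- An almost abelian Lie algebra: `L = F x ∔ A` with `A` an abelian ideal on which
`ad x` acts as the identity. -/
def IsAlmostAbelian : Prop :=
  ∃ (x : L) (A : LieIdeal F L), IsLieAbelian A ∧ (∀ a ∈ A, ⁅x, a⁆ = a) ∧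
    x ∉ A ∧ Submodule.span F {x} ⊔ A.toSubmodule = ⊤

/-- `N` is the nilradical of `L`: the largest nilpotent ideal. -/
def IsNilradical (N : LieIdeal F L) : Prop :=
  LieModule.IsNilpotent N N ∧ ∀ I : LieIdeal F L, LieModule.IsNilpotent I I → I ≤ N

/-- Upper semimodularity of the lattice of restricted subalgebras. -/
def UpperSemimodularP (pm : L → L) : Prop :=
  ∀ S T : LieSubalgebra F L, IsPSub F pm S → IsPSub F pm T →
    IsMaxIn F pm (S ⊓ T) T → IsMaxIn F pm S (pSpan F pm ((S : Set L) ∪ (T : Set L)))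

/-- Lower semimodularity of the lattice of restricted subalgebras. -/
def LowerSemimodularP (pm : L → L) : Prop :=
  ∀ U B : LieSubalgebra F L, IsPSub F pm U → IsPSub F pm B →
    IsMaxIn F pm U (pSpan F pm ((U : Set L) ∪ (B : Set L))) → IsMaxIn F pm (U ⊓ B) B

/-- `L` is supersolvable: it admits a complete flag of ideals. -/
def IsSupersolvable : Prop :=
  ∃ (n : ℕ) (f : Fin (n + 1) → LieIdeal F L), Monotone f ∧ f 0 = ⊥ ∧ f (Fin.last n) = ⊤ ∧
    ∀ j : Fin (n + 1), Module.finrank F (f j : Submodule F L) = (j : ℕ)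

end Preamble

/-! ### Auxiliary machinery for the main theorem -/

section Aux

variable {F : Type*} [Field F] {L : Type*} [LieRing L] [LieAlgebra F L]

/-- The span of a single element is a Lie subalgebra. -/
def lineSubalg (F : Type*) [Field F] {L : Type*} [LieRing L] [LieAlgebra F L]
    (u : L) : LieSubalgebra F L where
  toSubmodule := Submodule.span F {u}
  lie_mem' := by
    intro x y hx hy
    have hx' : x ∈ Submodule.span F {u} := hx
    have hy' : y ∈ Submodule.span F {u} := hy
    obtain ⟨c, rfl⟩ := Submodule.mem_span_singleton.mp hx'
    obtain ⟨d, rfl⟩ := Submodule.mem_span_singleton.mp hy'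
    show ⁅c • u, d • u⁆ ∈ Submodule.span F {u}
    simp [smul_lie, lie_smul]

@[simp] lemma mem_lineSubalg {u x : L} : x ∈ lineSubalg F u ↔ x ∈ Submodule.span F {u} :=
  Iff.rfl

/-- From dual atomisticity: a coatom above `S` avoiding a given element outside `S`. -/
lemma DuallyAtomistic.exists_coatom (h : DuallyAtomistic F L) (S : LieSubalgebra F L)
    {t : L} (ht : t ∉ S) :
    ∃ M : LieSubalgebra F L, S ≤ M ∧ t ∉ M ∧ ∀ S' : LieSubalgebra F L, M < S' → S' = ⊤ := by
  obtain ⟨𝓜, h1, h2⟩ := h S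
  have hmem : ¬ ∀ M ∈ 𝓜, t ∈ M := by
    intro hall
    apply ht
    rw [h2, ← SetLike.mem_coe, LieSubalgebra.coe_sInf]
    simpa using hall
  push_neg at hmem
  obtain ⟨M, hM𝓜, htM⟩ := hmem
  exact ⟨M, h2 ▸ sInf_le hM𝓜, htM, fun S' hS' => (h1 M hM𝓜).2 S' hS'⟩

/-- The sup of a subalgebra and an ideal is a subalgebra (on submodule level). -/
def supIdeal (M : LieSubalgebra F L) (A : LieIdeal F L) : LieSubalgebra F L where
  toSubmodule := M.toSubmodule ⊔ A.toSubmodule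
  lie_mem' := by
    intro x y hx hy
    have hx' : x ∈ M.toSubmodule ⊔ A.toSubmodule := hx
    have hy' : y ∈ M.toSubmodule ⊔ A.toSubmodule := hy
    obtain ⟨m1, hm1, a1, ha1, rfl⟩ := Submodule.mem_sup.mp hx'
    obtain ⟨m2, hm2, a2, ha2, rfl⟩ := Submodule.mem_sup.mp hy'
    show ⁅m1 + a1, m2 + a2⁆ ∈ M.toSubmodule ⊔ A.toSubmodule
    have hkey : ⁅m1 + a1, m2 + a2⁆ = ⁅m1, m2⁆ + (⁅m1, a2⁆ + (⁅a1, m2⁆ + ⁅a1, a2⁆)) := by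
      simp only [lie_add, add_lie]; abel
    rw [hkey]
    refine Submodule.add_mem _ (Submodule.mem_sup_left (M.lie_mem hm1 hm2)) ?_
    refine Submodule.mem_sup_right ?_
    have h1 : ⁅m1, a2⁆ ∈ A := A.lie_mem ((LieSubmodule.mem_toSubmodule _).mp ha2)
    have h2 : ⁅a1, m2⁆ ∈ A := by
      rw [← lie_skew]
      exact neg_mem (A.lie_mem ((LieSubmodule.mem_toSubmodule _).mp ha1))
    have h3 : ⁅a1, a2⁆ ∈ A := A.lie_mem ((LieSubmodule.mem_toSubmodule _).mp ha2)
    exact Submodule.add_mem _ h1 (Submodule.add_mem _ h2 h3)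

/-- If `M` is a coatom and the ideal `A` is not contained in `M`, then `M + A = L`. -/
lemma sup_ideal_eq_top {M : LieSubalgebra F L} (hmax : ∀ S' : LieSubalgebra F L, M < S' → S' = ⊤)
    (A : LieIdeal F L) {t : L} (htA : t ∈ A) (htM : t ∉ M) :
    M.toSubmodule ⊔ A.toSubmodule = ⊤ := by
  have hle : M ≤ supIdeal M A := fun x hx => Submodule.mem_sup_left hx
  have htS' : t ∈ supIdeal M A :=
    Submodule.mem_sup_right ((LieSubmodule.mem_toSubmodule _).mpr htA)
  have hlt : M < supIdeal M A := lt_of_le_of_ne hle (fun e => htM (e ▸ htS'))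
  have htop := hmax _ hlt
  have h2 : (supIdeal M A).toSubmodule = (⊤ : LieSubalgebra F L).toSubmodule := by rw [htop]
  rw [LieSubalgebra.top_toSubmodule] at h2
  exact h2

/-- A one-dimensional invariant line is an ideal. -/
def lineIdeal (w : L) (hw : ∀ x : L, ⁅x, w⁆ ∈ Submodule.span F {w}) : LieIdeal F L where
  toSubmodule := Submodule.span F {w}
  lie_mem := by
    intro x m hm
    have hm' : m ∈ Submodule.span F {w} := hm
    obtain ⟨c, rfl⟩ := Submodule.mem_span_singleton.mp hm'
    show ⁅x, c • w⁆ ∈ Submodule.span F {w}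
    rw [lie_smul]
    exact Submodule.smul_mem _ c (hw x)

@[simp] lemma mem_lineIdeal {w x : L} {hw : ∀ x : L, ⁅x, w⁆ ∈ Submodule.span F {w}} :
    x ∈ lineIdeal w hw ↔ x ∈ Submodule.span F {w} := Iff.rfl

lemma decomp_of_sup_line_eq_top {p : Submodule F L} {w : L}
    (htop : p ⊔ Submodule.span F {w} = ⊤) (y : L) :
    ∃ m ∈ p, ∃ c : F, y = m + c • w := by
  have hy : y ∈ p ⊔ Submodule.span F {w} := by rw [htop]; trivial
  obtain ⟨m, hm, s, hs, hsum⟩ := Submodule.mem_sup.mp hy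
  obtain ⟨c, rfl⟩ := Submodule.mem_span_singleton.mp hs
  exact ⟨m, hm, c, hsum.symm⟩

/-- The centralizer of an element, as a submodule. -/
def cent (F : Type*) [Field F] {L : Type*} [LieRing L] [LieAlgebra F L] (a : L) :
    Submodule F L where
  carrier := {x | ⁅x, a⁆ = 0}
  add_mem' := by
    intro x y hx hy
    simp only [Set.mem_setOf_eq, add_lie] at *
    rw [hx, hy, add_zero]
  zero_mem' := zero_lie a
  smul_mem' := by
    intro c x hx
    simp only [Set.mem_setOf_eq, smul_lie] at *
    rw [hx, smul_zero]

@[simp] lemma mem_cent {a x : L} : x ∈ cent F a ↔ ⁅x, a⁆ = 0 := Iff.rfl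

/-- If `span {a}` is an ideal with weight `lam`, brackets kill `a`. -/
lemma bracket_lie_eq_zero {a : L} {lam : L → F} (hla : ∀ x : L, ⁅x, a⁆ = lam x • a)
    (x y : L) : ⁅⁅x, y⁆, a⁆ = 0 := by
  rw [lie_lie, hla y, hla x, lie_smul, lie_smul, hla x, hla y, smul_smul, smul_smul,
    mul_comm, sub_self]

lemma lam_zero_of_cent {a : L} (ha : a ≠ 0) {lam : L → F}
    (hla : ∀ x : L, ⁅x, a⁆ = lam x • a) {u : L} (hu : ⁅u, a⁆ = 0) : lam u = 0 := by
  have h1 := hla u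
  rw [hu] at h1
  rcases smul_eq_zero.mp h1.symm with h' | h'
  · exact h'
  · exact absurd h' ha

/-- Key construction: if `M ⊔ span{w} = ⊤` where `w` is a weight vector for the same
weight `lam` as `a`, then `M ⊓ cent a` is an ideal of `L`. -/
def interKer {a : L} (ha : a ≠ 0) {lam : L → F} (hla : ∀ x : L, ⁅x, a⁆ = lam x • a)
    {w : L} (hw : ∀ x : L, ⁅x, w⁆ = lam x • w) (M : LieSubalgebra F L)
    (htop : M.toSubmodule ⊔ Submodule.span F {w} = ⊤) : LieIdeal F L where
  toSubmodule := M.toSubmodule ⊓ cent F a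
  lie_mem := by
    intro x u hu
    have hu' : u ∈ M.toSubmodule ⊓ cent F a := hu
    obtain ⟨huM, huK⟩ := Submodule.mem_inf.mp hu'
    have hlamu : lam u = 0 := lam_zero_of_cent ha hla huK
    obtain ⟨m, hm, c, rfl⟩ := decomp_of_sup_line_eq_top htop x
    show ⁅m + c • w, u⁆ ∈ M.toSubmodule ⊓ cent F a
    have hwu : ⁅w, u⁆ = 0 := by
      rw [← lie_skew, hw u, hlamu, zero_smul, neg_zero]
    have heq : ⁅m + c • w, u⁆ = ⁅m, u⁆ := by
      rw [add_lie, smul_lie, hwu, smul_zero, add_zero]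
    rw [heq]
    exact Submodule.mem_inf.mpr ⟨M.lie_mem hm huM, bracket_lie_eq_zero hla m u⟩

lemma mem_interKer {a : L} {ha : a ≠ 0} {lam : L → F} {hla : ∀ x : L, ⁅x, a⁆ = lam x • a}
    {w : L} {hw : ∀ x : L, ⁅x, w⁆ = lam x • w} {M : LieSubalgebra F L}
    {htop : M.toSubmodule ⊔ Submodule.span F {w} = ⊤} {x : L} :
    x ∈ interKer ha hla hw M htop ↔ x ∈ M.toSubmodule ∧ ⁅x, a⁆ = 0 :=
  Submodule.mem_inf

/-- The weight function of a one-dimensional ideal. -/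
noncomputable def lamOf {w : L} (hw : ∀ x : L, ⁅x, w⁆ ∈ Submodule.span F {w}) : L → F :=
  fun x => (Submodule.mem_span_singleton.mp (hw x)).choose

lemma lamOf_spec {w : L} (hw : ∀ x : L, ⁅x, w⁆ ∈ Submodule.span F {w}) (x : L) :
    ⁅x, w⁆ = lamOf hw x • w :=
  (Submodule.mem_span_singleton.mp (hw x)).choose_spec.symm

/-- All one-dimensional ideals of a dually atomistic Lie algebra have the same weight. -/
lemma lam_unique (h : DuallyAtomistic F L) {a v : L} (ha : a ≠ 0) (hv : v ≠ 0)
    {lama lamv : L → F} (hla : ∀ x : L, ⁅x, a⁆ = lama x • a)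
    (hlv : ∀ x : L, ⁅x, v⁆ = lamv x • v) (y : L) : lama y = lamv y := by
  by_cases hvs : v ∈ Submodule.span F {a}
  · obtain ⟨c, rfl⟩ := Submodule.mem_span_singleton.mp hvs
    have hc : c ≠ 0 := by rintro rfl; simp at hv
    have h1 : ⁅y, c • a⁆ = lama y • c • a := by
      rw [lie_smul, hla y, smul_comm]
    have h2 := hlv y
    rw [h1] at h2
    have h3 : (lama y - lamv y) • (c • a) = 0 := by rw [sub_smul, h2, sub_self]
    have h4 := (smul_eq_zero.mp h3).resolve_right (smul_ne_zero hc ha)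
    exact sub_eq_zero.mp h4
  · have has : a ∉ Submodule.span F {v} := by
      intro hcon
      obtain ⟨c, hc⟩ := Submodule.mem_span_singleton.mp hcon
      have hc0 : c ≠ 0 := by rintro rfl; rw [zero_smul] at hc; exact ha hc.symm
      exact hvs (Submodule.mem_span_singleton.mpr ⟨c⁻¹, by
        rw [← hc, smul_smul, inv_mul_cancel₀ hc0, one_smul]⟩)
    have hindep : ∀ s t : F, s • a + t • v = 0 → s = 0 ∧ t = 0 := by
      intro s t hst
      have ht : t = 0 := by
        by_contra ht
        apply hvs
        refine Submodule.mem_span_singleton.mpr ⟨-(t⁻¹ * s), ?_⟩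
        have h1 : t • v = -(s • a) := by
          rw [eq_neg_iff_add_eq_zero, add_comm]; exact hst
        rw [neg_smul, mul_smul, ← smul_neg, ← h1, smul_smul, inv_mul_cancel₀ ht, one_smul]
      refine ⟨?_, ht⟩
      rw [ht, zero_smul, add_zero] at hst
      exact (smul_eq_zero.mp hst).resolve_right ha
    have hav : ⁅a, v⁆ = 0 := by
      have h3 : lama v • a + lamv a • v = 0 := by
        calc lama v • a + lamv a • v = ⁅v, a⁆ + ⁅a, v⁆ := by rw [hla v, hlv a]
        _ = ⁅v, a⁆ + -⁅v, a⁆ := by rw [lie_skew]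
        _ = 0 := add_neg_cancel _
      rw [hlv a, (hindep _ _ h3).2, zero_smul]
    have hau : a ∉ lineSubalg F (a + v) := by
      rw [mem_lineSubalg]
      intro hcon
      obtain ⟨t, ht⟩ := Submodule.mem_span_singleton.mp hcon
      have h5 : (t - 1) • a + t • v = 0 := by
        rw [smul_add] at ht
        calc (t - 1) • a + t • v = (t • a + t • v) - a := by
              rw [sub_smul, one_smul]; abel
        _ = a - a := by rw [ht]
        _ = 0 := sub_self a
      obtain ⟨h6, h7⟩ := hindep _ _ h5
      rw [h7] at h6
      norm_num at h6
    obtain ⟨M, hle, haM, hmax⟩ := h.exists_coatom _ hau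
    have huM : a + v ∈ M := hle (Submodule.mem_span_singleton_self _)
    have hwa : ∀ x : L, ⁅x, a⁆ ∈ Submodule.span F {a} := fun x => by
      rw [hla x]; exact Submodule.smul_mem _ _ (Submodule.mem_span_singleton_self a)
    have htop : M.toSubmodule ⊔ Submodule.span F {a} = ⊤ :=
      sup_ideal_eq_top hmax (lineIdeal a hwa) (Submodule.mem_span_singleton_self a) haM
    obtain ⟨m, hm, c, hy⟩ := decomp_of_sup_line_eq_top htop y
    have h1 : ⁅y, a + v⁆ = ⁅m, a + v⁆ := by
      have hz : ⁅a, a + v⁆ = 0 := by rw [lie_add, lie_self, hav, add_zero]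
      rw [hy, add_lie, smul_lie, hz, smul_zero, add_zero]
    have hinM : ⁅m, a + v⁆ ∈ M := M.lie_mem hm huM
    have h2 : ⁅y, a + v⁆ = lamv y • (a + v) + (lama y - lamv y) • a := by
      rw [lie_add, hla y, hlv y, smul_add, sub_smul]
      abel
    have h3 : (lama y - lamv y) • a ∈ M := by
      have heq : (lama y - lamv y) • a = ⁅y, a + v⁆ - lamv y • (a + v) := by
        rw [h2]; abel
      rw [heq, h1]
      exact sub_mem hinM (Submodule.smul_mem M.toSubmodule _ huM)
    by_contra hne
    have hd : lama y - lamv y ≠ 0 := sub_ne_zero.mpr hne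
    apply haM
    have heq2 : a = (lama y - lamv y)⁻¹ • ((lama y - lamv y) • a) := by
      rw [smul_smul, inv_mul_cancel₀ hd, one_smul]
    rw [heq2]
    exact Submodule.smul_mem M.toSubmodule _ h3

/-- Any nonempty family of ideals has a minimal member (finite dimension). -/
lemma exists_minimal_mem [FiniteDimensional F L] (P : Set (LieIdeal F L)) (hne : P.Nonempty) :
    ∃ B ∈ P, ∀ C ∈ P, C ≤ B → C = B := by
  obtain ⟨I, hI⟩ := hne
  have hS : {n | ∃ B ∈ P, Module.finrank F B.toSubmodule = n}.Nonempty := ⟨_, I, hI, rfl⟩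
  obtain ⟨B, hBP, hBrank⟩ := Nat.sInf_mem hS
  refine ⟨B, hBP, fun C hC hCB => ?_⟩
  by_contra hne'
  have hlt : C.toSubmodule < B.toSubmodule :=
    lt_of_le_of_ne ((LieSubmodule.toSubmodule_le_toSubmodule _ _).mpr hCB)
      (fun e => hne' (LieSubmodule.toSubmodule_injective e))
  have h1 := Submodule.finrank_lt_finrank_of_lt hlt
  have h2 : sInf {n | ∃ B ∈ P, Module.finrank F B.toSubmodule = n}
      ≤ Module.finrank F C.toSubmodule := Nat.sInf_le ⟨C, hC, rfl⟩
  omega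

lemma exists_ne_zero_mem {B : LieIdeal F L} (hB : B ≠ ⊥) : ∃ c ∈ B, c ≠ 0 := by
  by_contra hall
  push_neg at hall
  exact hB ((LieSubmodule.eq_bot_iff B).mpr fun m hm => hall m hm)

/-- A minimal nonzero ideal of a dually atomistic Lie algebra containing a
one-dimensional ideal is itself one-dimensional. -/
lemma minimal_ideal_is_line [FiniteDimensional F L] (h : DuallyAtomistic F L) {a : L}
    (ha : a ≠ 0) {lam : L → F} (hla : ∀ x : L, ⁅x, a⁆ = lam x • a)
    {B : LieIdeal F L} (hB : B ≠ ⊥) (hmin : ∀ C : LieIdeal F L, C ≤ B → C ≠ ⊥ → C = B) :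
    ∃ v : L, v ≠ 0 ∧ B.toSubmodule = Submodule.span F {v} := by
  have hwa : ∀ x : L, ⁅x, a⁆ ∈ Submodule.span F {a} := fun x => by
    rw [hla x]; exact Submodule.smul_mem _ _ (Submodule.mem_span_singleton_self a)
  by_cases haB : a ∈ B
  · refine ⟨a, ha, ?_⟩
    have hle : lineIdeal a hwa ≤ B := by
      intro x hx
      have hx' : x ∈ Submodule.span F {a} := hx
      obtain ⟨c, rfl⟩ := Submodule.mem_span_singleton.mp hx'
      exact SMulMemClass.smul_mem c haB
    have hnb : lineIdeal a hwa ≠ ⊥ := by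
      intro hcon
      have h1 : a ∈ (⊥ : LieIdeal F L) := hcon ▸ Submodule.mem_span_singleton_self a
      rw [LieSubmodule.mem_bot] at h1
      exact ha h1
    have h2 := hmin _ hle hnb
    rw [← h2]
    rfl
  · have hBK : ∀ b ∈ B, ⁅b, a⁆ = 0 := by
      intro b hb
      have h1 : ⁅b, a⁆ ∈ B := by
        rw [← lie_skew]
        exact neg_mem (B.lie_mem hb)
      by_contra hne0
      have hl : lam b ≠ 0 := fun e => hne0 (by rw [hla b, e, zero_smul])
      apply haB
      have heq : a = (lam b)⁻¹ • ⁅b, a⁆ := by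
        rw [hla b, smul_smul, inv_mul_cancel₀ hl, one_smul]
      rw [heq]
      exact SMulMemClass.smul_mem _ h1
    obtain ⟨c, hcB, hc0⟩ := exists_ne_zero_mem hB
    have hcs : c ∉ Submodule.span F {a} := by
      intro hcon
      obtain ⟨t, ht⟩ := Submodule.mem_span_singleton.mp hcon
      have ht0 : t ≠ 0 := by rintro rfl; rw [zero_smul] at ht; exact hc0 ht.symm
      apply haB
      have heq : a = t⁻¹ • c := by rw [← ht, smul_smul, inv_mul_cancel₀ ht0, one_smul]
      rw [heq]
      exact SMulMemClass.smul_mem _ hcB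
    have hac : ⁅a, c⁆ = 0 := by rw [← lie_skew, hBK c hcB, neg_zero]
    have hau : a ∉ lineSubalg F (a + c) := by
      rw [mem_lineSubalg]
      intro hcon
      obtain ⟨t, ht⟩ := Submodule.mem_span_singleton.mp hcon
      by_cases ht0 : t = 0
      · rw [ht0, zero_smul] at ht; exact ha ht.symm
      · apply hcs
        refine Submodule.mem_span_singleton.mpr ⟨t⁻¹ * (1 - t), ?_⟩
        have h1 : t • c = (1 - t) • a := by
          rw [smul_add] at ht
          calc t • c = (t • a + t • c) - t • a := by abel
          _ = a - t • a := by rw [ht]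
          _ = (1 - t) • a := by rw [sub_smul, one_smul]
        rw [mul_smul, ← h1, smul_smul, inv_mul_cancel₀ ht0, one_smul]
    obtain ⟨M, hle, haM, hmax⟩ := h.exists_coatom _ hau
    have huM : a + c ∈ M := hle (Submodule.mem_span_singleton_self _)
    have htop : M.toSubmodule ⊔ Submodule.span F {a} = ⊤ :=
      sup_ideal_eq_top hmax (lineIdeal a hwa) (Submodule.mem_span_singleton_self a) haM
    have hcM : c ∉ M := by
      intro hcon
      apply haM
      have heq : a = (a + c) - c := by abel
      rw [heq]
      exact sub_mem huM hcon
    have hCbot : B ⊓ interKer ha hla hla M htop = ⊥ := by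
      by_contra hne'
      have heq := hmin (B ⊓ interKer ha hla hla M htop) inf_le_left hne'
      have hcI : c ∈ B ⊓ interKer ha hla hla M htop := heq.symm ▸ hcB
      exact hcM (mem_interKer.mp ((LieSubmodule.mem_inf _ _ _).mp hcI).2).1
    have hBM : B.toSubmodule ⊓ M.toSubmodule = ⊥ := by
      rw [eq_bot_iff]
      intro u hu
      obtain ⟨huB, huM'⟩ := Submodule.mem_inf.mp hu
      have huI : u ∈ B ⊓ interKer ha hla hla M htop :=
        (LieSubmodule.mem_inf _ _ _).mpr ⟨huB, mem_interKer.mpr ⟨huM', hBK u huB⟩⟩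
      rw [hCbot, LieSubmodule.mem_bot] at huI
      simp [huI]
    have hMa : M.toSubmodule ⊓ Submodule.span F {a} = ⊥ := by
      rw [eq_bot_iff]
      intro u hu
      obtain ⟨huM', hus⟩ := Submodule.mem_inf.mp hu
      obtain ⟨t, ht⟩ := Submodule.mem_span_singleton.mp hus
      by_cases ht0 : t = 0
      · rw [ht0, zero_smul] at ht; simp [← ht]
      · exfalso
        apply haM
        have heq : a = t⁻¹ • u := by rw [← ht, smul_smul, inv_mul_cancel₀ ht0, one_smul]
        rw [heq]
        exact Submodule.smul_mem M.toSubmodule _ huM'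
    have e1 := Submodule.finrank_sup_add_finrank_inf_eq M.toSubmodule (Submodule.span F {a})
    rw [htop, hMa, finrank_top, finrank_bot, finrank_span_singleton ha, add_zero] at e1
    have e2 := Submodule.finrank_sup_add_finrank_inf_eq B.toSubmodule M.toSubmodule
    rw [hBM, finrank_bot, add_zero] at e2
    have e3 : Module.finrank F ↥(B.toSubmodule ⊔ M.toSubmodule) ≤ Module.finrank F L :=
      Submodule.finrank_le _
    have e4 : Module.finrank F B.toSubmodule ≤ 1 := by omega
    obtain ⟨v, hvB, hv0⟩ := exists_ne_zero_mem hB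
    refine ⟨v, hv0, ?_⟩
    have hle' : Submodule.span F {v} ≤ B.toSubmodule := by
      rw [Submodule.span_singleton_le_iff_mem]
      exact hvB
    have e5 : Module.finrank F B.toSubmodule ≤ Module.finrank F (Submodule.span F {v}) := by
      rw [finrank_span_singleton hv0]
      exact e4
    exact (Submodule.eq_of_le_of_finrank_le hle' e5).symm

end Aux

section Aux2

variable {F : Type*} [Field F] {L : Type*} [LieRing L] [LieAlgebra F L]

/-- Every element of the centralizer of the one-dimensional ideal `span{a}` spans an
ideal of a dually atomistic Lie algebra. -/
lemma line_ideal_of_centralizer [FiniteDimensional F L] (h : DuallyAtomistic F L) {a : L}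
    (ha : a ≠ 0) {lam : L → F} (hla : ∀ x : L, ⁅x, a⁆ = lam x • a)
    {b : L} (hb : ⁅b, a⁆ = 0) : ∀ x : L, ⁅x, b⁆ ∈ Submodule.span F {b} := by
  by_cases hb0 : b = 0
  · intro x; rw [hb0, lie_zero]; exact Submodule.zero_mem _
  by_contra hnot
  push_neg at hnot
  obtain ⟨x₁, hx₁⟩ := hnot
  have hmult : ∀ v : L, (∀ x : L, ⁅x, v⁆ = lam x • v) → b ∉ Submodule.span F {v} := by
    intro v hlv hcon
    obtain ⟨t, ht⟩ := Submodule.mem_span_singleton.mp hcon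
    apply hx₁
    rw [← ht, lie_smul, hlv x₁, smul_comm]
    exact Submodule.smul_mem _ _ (Submodule.mem_span_singleton_self _)
  have hab : a ∉ Submodule.span F {b} := by
    intro hcon
    obtain ⟨t, ht⟩ := Submodule.mem_span_singleton.mp hcon
    have ht0 : t ≠ 0 := by rintro rfl; rw [zero_smul] at ht; exact ha ht.symm
    exact hmult a hla (Submodule.mem_span_singleton.mpr ⟨t⁻¹, by
      rw [← ht, smul_smul, inv_mul_cancel₀ ht0, one_smul]⟩)
  obtain ⟨M₀, hle₀, haM₀, hmax₀⟩ := h.exists_coatom (lineSubalg F b)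
    (by rw [mem_lineSubalg]; exact hab)
  have hwa : ∀ x : L, ⁅x, a⁆ ∈ Submodule.span F {a} := fun x => by
    rw [hla x]; exact Submodule.smul_mem _ _ (Submodule.mem_span_singleton_self a)
  have htop₀ : M₀.toSubmodule ⊔ Submodule.span F {a} = ⊤ :=
    sup_ideal_eq_top hmax₀ (lineIdeal a hwa) (Submodule.mem_span_singleton_self a) haM₀
  have hPne : ∃ I : LieIdeal F L, b ∈ I ∧ ∀ u ∈ I, ⁅u, a⁆ = 0 := by
    refine ⟨interKer ha hla hla M₀ htop₀,
      mem_interKer.mpr ⟨hle₀ (Submodule.mem_span_singleton_self b), hb⟩, ?_⟩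
    intro u hu
    exact (mem_interKer.mp hu).2
  obtain ⟨I₀, hI₀P, hI₀min⟩ := exists_minimal_mem
    {I : LieIdeal F L | b ∈ I ∧ ∀ u ∈ I, ⁅u, a⁆ = 0} hPne
  simp only [Set.mem_setOf_eq] at hI₀P
  obtain ⟨hbI₀, hI₀K⟩ := hI₀P
  have hI₀ne : I₀ ≠ ⊥ := by
    intro e
    rw [e, LieSubmodule.mem_bot] at hbI₀
    exact hb0 hbI₀
  obtain ⟨B, hBmem, hBmin⟩ := exists_minimal_mem {C : LieIdeal F L | C ≤ I₀ ∧ C ≠ ⊥}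
    ⟨I₀, le_refl _, hI₀ne⟩
  simp only [Set.mem_setOf_eq] at hBmem
  obtain ⟨hBI₀, hBne⟩ := hBmem
  have hmin' : ∀ C : LieIdeal F L, C ≤ B → C ≠ ⊥ → C = B := fun C hCB hC0 =>
    hBmin C ⟨le_trans hCB hBI₀, hC0⟩ hCB
  obtain ⟨v, hv0, hBspan⟩ := minimal_ideal_is_line h ha hla hBne hmin'
  have hvB : v ∈ B := by
    have hv : v ∈ B.toSubmodule := hBspan ▸ Submodule.mem_span_singleton_self v
    exact hv
  have hwv : ∀ x : L, ⁅x, v⁆ ∈ Submodule.span F {v} := by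
    intro x
    have hxv : ⁅x, v⁆ ∈ B.toSubmodule := B.lie_mem hvB
    rw [hBspan] at hxv
    exact hxv
  have hlv : ∀ x : L, ⁅x, v⁆ = lam x • v := by
    intro x
    have he := lam_unique h ha hv0 hla (lamOf_spec hwv) x
    rw [lamOf_spec hwv x, ← he]
  have hbv : b ∉ Submodule.span F {v} := hmult v hlv
  have hvb : v ∉ Submodule.span F {b} := by
    intro hcon
    obtain ⟨t, ht⟩ := Submodule.mem_span_singleton.mp hcon
    have ht0 : t ≠ 0 := by rintro rfl; rw [zero_smul] at ht; exact hv0 ht.symm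
    exact hbv (Submodule.mem_span_singleton.mpr ⟨t⁻¹, by
      rw [← ht, smul_smul, inv_mul_cancel₀ ht0, one_smul]⟩)
  obtain ⟨M', hle', hvM', hmax'⟩ := h.exists_coatom (lineSubalg F b)
    (by rw [mem_lineSubalg]; exact hvb)
  have htop' : M'.toSubmodule ⊔ Submodule.span F {v} = ⊤ :=
    sup_ideal_eq_top hmax' (lineIdeal v hwv) (Submodule.mem_span_singleton_self v) hvM'
  have hI'P : I₀ ⊓ interKer ha hla hlv M' htop' ∈
      {I : LieIdeal F L | b ∈ I ∧ ∀ u ∈ I, ⁅u, a⁆ = 0} := by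
    constructor
    · exact (LieSubmodule.mem_inf _ _ _).mpr ⟨hbI₀,
        mem_interKer.mpr ⟨hle' (Submodule.mem_span_singleton_self b), hb⟩⟩
    · intro u hu
      exact hI₀K u ((LieSubmodule.mem_inf _ _ _).mp hu).1
  have heq := hI₀min _ hI'P inf_le_left
  have hvI' : v ∈ I₀ ⊓ interKer ha hla hlv M' htop' := heq.symm ▸ (hBI₀ hvB)
  exact hvM' (mem_interKer.mp ((LieSubmodule.mem_inf _ _ _).mp hvI').2).1

/-- Elements of the centralizer are weight vectors for the common weight. -/
lemma eigen_of_cent [FiniteDimensional F L] (h : DuallyAtomistic F L) {a : L} (ha : a ≠ 0)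
    {lam : L → F} (hla : ∀ x : L, ⁅x, a⁆ = lam x • a) {b : L} (hb : ⁅b, a⁆ = 0)
    (x : L) : ⁅x, b⁆ = lam x • b := by
  by_cases hb0 : b = 0
  · rw [hb0, lie_zero, smul_zero]
  · have hwb := line_ideal_of_centralizer h ha hla hb
    have he := lam_unique h ha hb0 hla (lamOf_spec hwb) x
    rw [lamOf_spec hwb x, ← he]

/-- Case 2: if the one-dimensional ideal `span{a}` is not central, `L` is almost abelian. -/
lemma almostAbelian_case [FiniteDimensional F L] (h : DuallyAtomistic F L) {a : L} (ha : a ≠ 0)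
    {lam : L → F} (hla : ∀ x : L, ⁅x, a⁆ = lam x • a) {x₁ : L} (hx₁ : ⁅x₁, a⁆ ≠ 0) :
    IsAlmostAbelian F L := by
  have hc : lam x₁ ≠ 0 := fun e => hx₁ (by rw [hla x₁, e, zero_smul])
  set x₀ := (lam x₁)⁻¹ • x₁ with hx₀
  have hx₀a : ⁅x₀, a⁆ = a := by
    rw [hx₀, smul_lie, hla x₁, smul_smul, inv_mul_cancel₀ hc, one_smul]
  have hlamx₀ : lam x₀ = 1 := by
    have h1 := hla x₀
    rw [hx₀a] at h1
    have h2 : (lam x₀ - 1) • a = 0 := by rw [sub_smul, one_smul, ← h1, sub_self]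
    exact sub_eq_zero.mp ((smul_eq_zero.mp h2).resolve_right ha)
  refine ⟨x₀, ⟨cent F a, fun {x u} hu => bracket_lie_eq_zero hla x u⟩, ?_, ?_, ?_, ?_⟩
  · constructor
    intro p q
    have hp : ⁅(p : L), a⁆ = 0 := p.2
    have hq : ⁅(q : L), a⁆ = 0 := q.2
    have hpq : ⁅(p : L), (q : L)⁆ = 0 := by
      rw [eigen_of_cent h ha hla hq (p : L), lam_zero_of_cent ha hla hp, zero_smul]
    exact Subtype.ext hpq
  · intro u hu
    have hu' : ⁅u, a⁆ = 0 := hu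
    rw [eigen_of_cent h ha hla hu' x₀, hlamx₀, one_smul]
  · intro hcon
    have hx0c : ⁅x₀, a⁆ = 0 := hcon
    rw [hx₀a] at hx0c
    exact ha hx0c
  · rw [eq_top_iff]
    intro y _
    have hk : ⁅y - lam y • x₀, a⁆ = 0 := by
      rw [sub_lie, smul_lie, hx₀a, hla y, sub_self]
    exact Submodule.mem_sup.mpr ⟨lam y • x₀,
      Submodule.smul_mem _ _ (Submodule.mem_span_singleton_self x₀),
      y - lam y • x₀, hk, by abel⟩

/-- Case 1: a dually atomistic Lie algebra with nonzero center is abelian. -/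
lemma abelian_case (h : DuallyAtomistic F L) {z : L} (hz : z ≠ 0)
    (hzc : ∀ y : L, ⁅z, y⁆ = 0) : IsLieAbelian L := by
  have C1M : ∀ (t : L), t ≠ 0 → (∀ y : L, ⁅t, y⁆ = 0) →
      ∀ (M : LieSubalgebra F L), (∀ S' : LieSubalgebra F L, M < S' → S' = ⊤) → t ∉ M →
      ∀ x y : L, ⁅x, y⁆ ∈ M := by
    intro t ht0 htc M hmax htM x y
    have hwt : ∀ x : L, ⁅x, t⁆ ∈ Submodule.span F {t} := fun x => by
      rw [← lie_skew, htc x, neg_zero]; exact Submodule.zero_mem _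
    have htop : M.toSubmodule ⊔ Submodule.span F {t} = ⊤ :=
      sup_ideal_eq_top hmax (lineIdeal t hwt) (Submodule.mem_span_singleton_self t) htM
    obtain ⟨m, hm, c, rfl⟩ := decomp_of_sup_line_eq_top htop x
    obtain ⟨m', hm', c', rfl⟩ := decomp_of_sup_line_eq_top htop y
    have hmt : ⁅m, t⁆ = 0 := by rw [← lie_skew, htc m, neg_zero]
    have heq : ⁅m + c • t, m' + c' • t⁆ = ⁅m, m'⁆ := by
      simp [add_lie, lie_add, lie_smul, smul_lie, hmt, htc]
    rw [heq]
    exact M.lie_mem hm hm'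
  constructor
  intro u v
  by_contra hw
  by_cases hws : ⁅u, v⁆ ∈ Submodule.span F {z}
  · obtain ⟨s, hs⟩ := Submodule.mem_span_singleton.mp hws
    have hwc : ∀ y : L, ⁅⁅u, v⁆, y⁆ = 0 := by
      intro y; rw [← hs, smul_lie, hzc y, smul_zero]
    have hwu : ⁅u, v⁆ ∈ Submodule.span F {u} := by
      by_contra hcon
      obtain ⟨M, hle, hwM, hmax⟩ := h.exists_coatom (lineSubalg F u)
        (by rw [mem_lineSubalg]; exact hcon)
      exact hwM (C1M _ hw hwc M hmax hwM u v)
    obtain ⟨t, ht⟩ := Submodule.mem_span_singleton.mp hwu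
    have ht0 : t ≠ 0 := by rintro rfl; rw [zero_smul] at ht; exact hw ht.symm
    apply hw
    have hu : u = t⁻¹ • ⁅u, v⁆ := by rw [← ht, smul_smul, inv_mul_cancel₀ ht0, one_smul]
    calc ⁅u, v⁆ = ⁅t⁻¹ • ⁅u, v⁆, v⁆ := by rw [← hu]
    _ = t⁻¹ • ⁅⁅u, v⁆, v⁆ := smul_lie _ _ _
    _ = 0 := by rw [hwc v, smul_zero]
  · have hzu : z ∉ lineSubalg F (z + ⁅u, v⁆) := by
      rw [mem_lineSubalg]
      intro hcon
      obtain ⟨t, ht⟩ := Submodule.mem_span_singleton.mp hcon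
      by_cases ht0 : t = 0
      · rw [ht0, zero_smul] at ht; exact hz ht.symm
      · apply hws
        refine Submodule.mem_span_singleton.mpr ⟨t⁻¹ * (1 - t), ?_⟩
        have h1 : t • ⁅u, v⁆ = (1 - t) • z := by
          rw [smul_add] at ht
          calc t • ⁅u, v⁆ = (t • z + t • ⁅u, v⁆) - t • z := by abel
          _ = z - t • z := by rw [ht]
          _ = (1 - t) • z := by rw [sub_smul, one_smul]
        rw [mul_smul, ← h1, smul_smul, inv_mul_cancel₀ ht0, one_smul]
    obtain ⟨M, hle, hzM, hmax⟩ := h.exists_coatom _ hzu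
    have hwM : ⁅u, v⁆ ∈ M := C1M z hz hzc M hmax hzM u v
    have huM : z + ⁅u, v⁆ ∈ M := hle (Submodule.mem_span_singleton_self _)
    apply hzM
    have heq : z = (z + ⁅u, v⁆) - ⁅u, v⁆ := by abel
    rw [heq]
    exact sub_mem huM hwM

end Aux2

/-- a finite-dimensional dually atomistic Lie algebra over any field is
abelian, almost abelian, or semisimple. -/
theorem dually_atomistic_abelian_or_almostAbelian_or_semisimple
    (F : Type*) [Field F] (L : Type*) [LieRing L] [LieAlgebra F L]
    [FiniteDimensional F L] (h : DuallyAtomistic F L) :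
    IsLieAbelian L ∨ IsAlmostAbelian F L ∨ LieAlgebra.radical F L = ⊥ := by
  by_cases hrad : LieAlgebra.radical F L = ⊥
  · exact Or.inr (Or.inr hrad)
  have hA₀ne : LieAlgebra.derivedAbelianOfIdeal (LieAlgebra.radical F L) ≠ ⊥ := by
    intro e
    exact hrad ((LieAlgebra.abelian_of_solvable_ideal_eq_bot_iff _).mp e)
  set A₀ := LieAlgebra.derivedAbelianOfIdeal (LieAlgebra.radical F L) with hA₀def
  have hA₀ab : IsLieAbelian A₀ := LieAlgebra.abelian_derivedAbelianOfIdeal _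
  have habL : ∀ p ∈ A₀, ∀ q ∈ A₀, ⁅p, q⁆ = 0 := by
    intro p hp q hq
    exact congrArg Subtype.val (hA₀ab.trivial ⟨p, hp⟩ ⟨q, hq⟩)
  obtain ⟨B, hBmem, hBmin⟩ := exists_minimal_mem {C : LieIdeal F L | C ≤ A₀ ∧ C ≠ ⊥}
    ⟨A₀, le_refl _, hA₀ne⟩
  simp only [Set.mem_setOf_eq] at hBmem
  obtain ⟨hBA₀, hBne⟩ := hBmem
  obtain ⟨a0, ha0B, ha0⟩ := exists_ne_zero_mem hBne
  have hline : ∃ a : L, a ≠ 0 ∧ ∀ x : L, ⁅x, a⁆ ∈ Submodule.span F {a} := by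
    by_cases hsub : B.toSubmodule ≤ Submodule.span F {a0}
    · refine ⟨a0, ha0, fun x => hsub (B.lie_mem ha0B)⟩
    · obtain ⟨t, htB, hts⟩ := SetLike.not_le_iff_exists.mp hsub
      have hta : t ∉ lineSubalg F a0 := hts
      obtain ⟨M, hle, htM, hmax⟩ := h.exists_coatom (lineSubalg F a0) hta
      have ha0M : a0 ∈ M := hle (Submodule.mem_span_singleton_self a0)
      have htop : M.toSubmodule ⊔ B.toSubmodule = ⊤ := sup_ideal_eq_top hmax B htB htM
      set C : LieIdeal F L :=
        { toSubmodule := M.toSubmodule ⊓ B.toSubmodule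
          lie_mem := by
            intro x u hu
            have hu' : u ∈ M.toSubmodule ⊓ B.toSubmodule := hu
            obtain ⟨huM, huB⟩ := Submodule.mem_inf.mp hu'
            have hx : x ∈ M.toSubmodule ⊔ B.toSubmodule := by rw [htop]; trivial
            obtain ⟨m, hm, p, hp, rfl⟩ := Submodule.mem_sup.mp hx
            show ⁅m + p, u⁆ ∈ M.toSubmodule ⊓ B.toSubmodule
            have hpu : ⁅p, u⁆ = 0 := habL p (hBA₀ hp) u (hBA₀ huB)
            have heq : ⁅m + p, u⁆ = ⁅m, u⁆ := by rw [add_lie, hpu, add_zero]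
            rw [heq]
            exact Submodule.mem_inf.mpr ⟨M.lie_mem hm huM, B.lie_mem huB⟩ } with hC
      have hCle : C ≤ B := fun x hx => (Submodule.mem_inf.mp hx).2
      have hCne : C ≠ ⊥ := by
        intro e
        have ha0C : a0 ∈ C := Submodule.mem_inf.mpr ⟨ha0M, ha0B⟩
        rw [e, LieSubmodule.mem_bot] at ha0C
        exact ha0 ha0C
      have hCB := hBmin C ⟨le_trans hCle hBA₀, hCne⟩ hCle
      exfalso
      apply htM
      have htC : t ∈ C := hCB.symm ▸ htB
      exact (Submodule.mem_inf.mp htC).1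
  obtain ⟨a, ha, hwa⟩ := hline
  have hla : ∀ x : L, ⁅x, a⁆ = lamOf hwa x • a := lamOf_spec hwa
  by_cases hcent : ∀ y : L, ⁅a, y⁆ = 0
  · exact Or.inl (abelian_case h ha hcent)
  · push_neg at hcent
    obtain ⟨y, hy⟩ := hcent
    have hya : ⁅y, a⁆ ≠ 0 := by
      intro e
      apply hy
      rw [← lie_skew, e, neg_zero]
    exact Or.inr (Or.inl (almostAbelian_case h ha hla hya))
end

section
/- If L is a dually atomistic restricted Lie algebra (every restricted subalgebra is an intersection of maximal restricted subalgebras), then the nilradical N(L) of L is abelian. -/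
open LieAlgebra Module

section MyAux

variable {F : Type*} [Field F] {L : Type*} [LieRing L] [LieAlgebra F L]

private lemma my_mem_sInf {T : Set (LieSubalgebra F L)} {x : L} :
    x ∈ sInf T ↔ ∀ S ∈ T, x ∈ S := by
  rw [← SetLike.mem_coe, LieSubalgebra.coe_sInf]
  simp

private lemma my_subset_pSpan (pm : L → L) (s : Set L) {x : L} (hx : x ∈ s) :
    x ∈ pSpan F pm s := by
  rw [pSpan, my_mem_sInf]
  exact fun S hS => hS.2 hx

private lemma my_pSpan_isPSub (pm : L → L) (s : Set L) : IsPSub F pm (pSpan F pm s) := by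
  intro x hx
  rw [pSpan, my_mem_sInf] at hx ⊢
  exact fun S hS => hS.1 x (hx S hS)

private lemma my_pSpan_le {pm : L → L} {s : Set L} {S : LieSubalgebra F L}
    (hS : IsPSub F pm S) (h : s ⊆ S) {x : L} (hx : x ∈ pSpan F pm s) : x ∈ S := by
  rw [pSpan, my_mem_sInf] at hx
  exact hx S ⟨hS, h⟩

/-- Iterated bracket `⁅N, ⁅N, … N⁆⁆`, `DD N 0 = N`. -/
private def DD (N : LieIdeal F L) : ℕ → LieIdeal F L := fun k => (fun J => ⁅N, J⁆)^[k] N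

variable (N : LieIdeal F L)

private lemma DD_zero : DD N 0 = N := rfl

private lemma DD_succ (k : ℕ) : DD N (k + 1) = ⁅N, DD N k⁆ :=
  Function.iterate_succ_apply' _ _ _

private lemma DD_succ_le (k : ℕ) : DD N (k + 1) ≤ DD N k := by
  rw [DD_succ]; exact LieSubmodule.lie_le_right _ _

private lemma DD_antitone : Antitone (DD N) :=
  antitone_nat_of_succ_le (DD_succ_le N)

private lemma DD_le (k : ℕ) : DD N k ≤ N := DD_antitone N (Nat.zero_le k)

private lemma lie_mem_DD {x y : L} {k : ℕ} (hx : x ∈ N) (hy : y ∈ DD N k) :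
    ⁅x, y⁆ ∈ DD N (k + 1) := by
  rw [DD_succ]; exact LieSubmodule.lie_mem_lie hx hy

private lemma lie_DD_one (b : ℕ) {x : L} (hx : x ∈ DD N 1) :
    ∀ m ∈ DD N b, ⁅x, m⁆ ∈ DD N (b + 2) := by
  have hx' : x ∈ Submodule.span F {m | ∃ u ∈ N, ∃ v ∈ N, ⁅u, v⁆ = m} := by
    have h1 : DD N 1 = ⁅N, N⁆ := by rw [DD_succ, DD_zero]
    rw [h1] at hx
    rw [← LieSubmodule.lieIdeal_oper_eq_linear_span']
    exact hx
  clear hx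
  induction hx' using Submodule.span_induction with
  | mem x hm =>
    obtain ⟨u, hu, v, hv, rfl⟩ := hm
    intro m hm'
    rw [lie_lie]
    exact sub_mem (lie_mem_DD N hu (lie_mem_DD N hv hm')) (lie_mem_DD N hv (lie_mem_DD N hu hm'))
  | zero => intro m _; rw [zero_lie]; exact zero_mem _
  | add x y _ _ ha hb => intro m hm; rw [add_lie]; exact add_mem (ha m hm) (hb m hm)
  | smul c x _ hx => intro m hm; rw [smul_lie]; exact Submodule.smul_mem _ c (hx m hm)

end MyAux

section MyAux2

variable {F : Type*} [Field F] {L : Type*} [LieRing L] [LieAlgebra F L]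

/-- The set of `x` with `⁅x, L⁆ ⊆ ⁅N,N⁆` and `⁅x, DD N k⁆ ⊆ DD N (k+2)`. -/
private def Csub (N : LieIdeal F L) : LieSubalgebra F L where
  carrier := {x : L | (∀ y : L, ⁅x, y⁆ ∈ DD N 1) ∧
    ∀ k : ℕ, ∀ y ∈ DD N k, ⁅x, y⁆ ∈ DD N (k + 2)}
  zero_mem' := ⟨fun y => by rw [zero_lie]; exact zero_mem _,
    fun k y _ => by rw [zero_lie]; exact zero_mem _⟩
  add_mem' := by
    rintro a b ⟨ha1, ha2⟩ ⟨hb1, hb2⟩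
    exact ⟨fun y => by rw [add_lie]; exact add_mem (ha1 y) (hb1 y),
      fun k y hy => by rw [add_lie]; exact add_mem (ha2 k y hy) (hb2 k y hy)⟩
  smul_mem' := by
    rintro c a ⟨ha1, ha2⟩
    exact ⟨fun y => by rw [smul_lie]; exact Submodule.smul_mem _ c (ha1 y),
      fun k y hy => by rw [smul_lie]; exact Submodule.smul_mem _ c (ha2 k y hy)⟩
  lie_mem' := by
    rintro a b ⟨ha1, ha2⟩ ⟨hb1, hb2⟩
    constructor
    · intro y
      rw [lie_lie]
      exact sub_mem (ha1 _) (hb1 _)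
    · intro k y hy
      rw [lie_lie]
      have h1 : ⁅a, ⁅b, y⁆⁆ ∈ DD N (k + 2 + 2) := ha2 (k + 2) _ (hb2 k y hy)
      have h2 : ⁅b, ⁅a, y⁆⁆ ∈ DD N (k + 2 + 2) := hb2 (k + 2) _ (ha2 k y hy)
      exact sub_mem (DD_antitone N (by omega) h1) (DD_antitone N (by omega) h2)

variable (N : LieIdeal F L)

private lemma DD_one_le_Csub {x : L} (hx : x ∈ DD N 1) : x ∈ Csub N := by
  refine ⟨fun y => ?_, fun k y hy => lie_DD_one N k hx y hy⟩
  have h : ⁅y, x⁆ ∈ DD N 1 := (DD N 1).lie_mem hx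
  rw [← lie_skew]
  exact neg_mem h

private lemma exists_DD_eq_bot [FiniteDimensional F L]
    (hN1 : LieModule.IsNilpotent (↥N) (↥N)) : ∃ K, DD N K = ⊥ := by
  obtain ⟨k, hk⟩ := (LieModule.isNilpotent_iff F (↥N) (↥N)).mp hN1
  refine ⟨k, ?_⟩
  have main : ∀ j, LieSubmodule.toSubmodule (DD N j) ≤
      (LieSubmodule.toSubmodule (LieModule.lowerCentralSeries F (↥N) (↥N) j)).map
        (LieSubmodule.toSubmodule N).subtype := by
    intro j
    induction j with
    | zero =>
      rw [DD_zero]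
      intro x hx
      exact ⟨⟨x, hx⟩, by simp, rfl⟩
    | succ j ih =>
      rw [DD_succ, LieSubmodule.lieIdeal_oper_eq_linear_span', Submodule.span_le]
      rintro _ ⟨u, hu, v, hv, rfl⟩
      have hv' : v ∈ LieSubmodule.toSubmodule (DD N j) := hv
      obtain ⟨w, hw, rfl⟩ := Submodule.mem_map.mp (ih hv')
      refine Submodule.mem_map.mpr ⟨⁅(⟨u, hu⟩ : ↥N), w⁆, ?_, rfl⟩
      rw [LieModule.lowerCentralSeries_succ]
      exact LieSubmodule.lie_mem_lie (LieSubmodule.mem_top _) hw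
  rw [eq_bot_iff]
  intro x hx
  have := main k hx
  rw [hk] at this
  simpa using this

private lemma Csub_le_N [FiniteDimensional F L] (hbot : ∃ K, DD N K = ⊥)
    (hmax : ∀ I : LieIdeal F L, LieModule.IsNilpotent (↥I) (↥I) → I ≤ N)
    {x : L} (hx : x ∈ Csub N) : x ∈ N := by
  obtain ⟨hx1, hx2⟩ := hx
  obtain ⟨K, hK⟩ := hbot
  have hxN1 : ∀ y : L, ⁅x, y⁆ ∈ N := fun y => DD_le N 1 (hx1 y)
  let J : LieIdeal F L :=
    { LieSubmodule.toSubmodule N ⊔ (F ∙ x) with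
      lie_mem := by
        intro y m hm
        rcases Submodule.mem_sup.mp hm with ⟨n, hn, v, hv, rfl⟩
        obtain ⟨c, rfl⟩ := Submodule.mem_span_singleton.mp hv
        have h1 : ⁅y, n⁆ ∈ N := N.lie_mem hn
        have h2 : ⁅y, x⁆ ∈ N := by
          rw [← lie_skew]
          exact neg_mem (hxN1 y)
        refine Submodule.mem_sup_left (?_ : _ ∈ LieSubmodule.toSubmodule N)
        rw [lie_add, lie_smul]
        exact add_mem h1 (Submodule.smul_mem _ c h2) }
  have hxJ : x ∈ J := Submodule.mem_sup_right (Submodule.mem_span_singleton_self x)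
  -- decompose elements of J and act on the DD filtration
  have hact1 : ∀ z ∈ J, ∀ m : L, ⁅z, m⁆ ∈ N := by
    intro z hz m
    rcases Submodule.mem_sup.mp hz with ⟨n, hn, v, hv, rfl⟩
    obtain ⟨c, rfl⟩ := Submodule.mem_span_singleton.mp hv
    rw [add_lie, smul_lie]
    have hnm : ⁅n, m⁆ ∈ N := by
      rw [← lie_skew]
      exact neg_mem (N.lie_mem hn)
    exact add_mem hnm (Submodule.smul_mem _ c (hxN1 m))
  have hact2 : ∀ z ∈ J, ∀ k : ℕ, ∀ y ∈ DD N k, ⁅z, y⁆ ∈ DD N (k + 1) := by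
    intro z hz k y hy
    rcases Submodule.mem_sup.mp hz with ⟨n, hn, v, hv, rfl⟩
    obtain ⟨c, rfl⟩ := Submodule.mem_span_singleton.mp hv
    rw [add_lie, smul_lie]
    exact add_mem (lie_mem_DD N hn hy)
      (Submodule.smul_mem _ c (DD_antitone N (by omega) (hx2 k y hy)))
  have hJnil : LieModule.IsNilpotent (↥J) (↥J) := by
    apply LieAlgebra.isEngelian_of_isNoetherian (R := F) (L := ↥J) ↥J
    intro z
    refine ⟨K + 2, ?_⟩
    have aux : ∀ k (m : ↥J), (((LieModule.toEnd F (↥J) (↥J) z) ^ (k + 1)) m : L) ∈ DD N k := by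
      intro k
      induction k with
      | zero =>
        intro m
        rw [pow_one, LieModule.toEnd_apply_apply]
        exact hact1 (z : L) z.2 (m : L)
      | succ k ihk =>
        intro m
        rw [pow_succ', Module.End.mul_apply, LieModule.toEnd_apply_apply]
        exact hact2 (z : L) z.2 k _ (ihk m)
    ext m
    have h0 := aux (K + 1) m
    have hle : DD N (K + 1) ≤ (⊥ : LieIdeal F L) := hK ▸ DD_succ_le N K
    have : ((((LieModule.toEnd F (↥J) (↥J) z) ^ (K + 2)) m : ↥J) : L) = 0 := by
      simpa using hle h0
    simpa using this
  exact hmax J hJnil hxJ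

private lemma isPSub_Csub {p : ℕ} {pm : L → L} (hpm : IsPMapping F L p pm) (hp : 0 < p) :
    IsPSub F pm (Csub N) := by
  rintro x ⟨hx1, hx2⟩
  obtain ⟨q, rfl⟩ : ∃ q, p = q + 1 := ⟨p - 1, by omega⟩
  constructor
  · intro y
    rw [hpm.ad_pow, pow_succ', Module.End.mul_apply, LieAlgebra.ad_apply]
    exact hx1 _
  · intro k y hy
    rw [hpm.ad_pow]
    have aux : ∀ m, ∀ y ∈ DD N k, ((LieAlgebra.ad F L x) ^ m) y ∈ DD N (k + 2 * m) := by
      intro m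
      induction m with
      | zero =>
        intro y hy
        rw [pow_zero, Module.End.one_apply]
        exact hy
      | succ m ih =>
        intro y hy
        rw [pow_succ', Module.End.mul_apply, LieAlgebra.ad_apply]
        have := hx2 (k + 2 * m) _ (ih y hy)
        exact DD_antitone N (by omega) this
    exact DD_antitone N (by omega) (aux (q + 1) y hy)

end MyAux2

section MyAux3

variable {F : Type*} [Field F] {L : Type*} [LieRing L] [LieAlgebra F L]
variable [FiniteDimensional F L]

private lemma DD_one_le_max {p : ℕ} {pm : L → L} (hpm : IsPMapping F L p pm) (hp : 0 < p)
    (N : LieIdeal F L) (hN : IsNilradical F L N)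
    {M : LieSubalgebra F L} (hM : IsMaxPSub F pm M) : ∀ x ∈ DD N 1, x ∈ M := by
  have hbot : ∃ K, DD N K = ⊥ := exists_DD_eq_bot N hN.1
  have hCN : ∀ x ∈ Csub N, x ∈ N := fun x hx => Csub_le_N N hbot hN.2 hx
  set Z : LieSubalgebra F L := pSpan F pm ((DD N 1 : LieIdeal F L) : Set L) with hZdef
  have hZp : IsPSub F pm Z := my_pSpan_isPSub pm _
  have hZC : ∀ z ∈ Z, z ∈ Csub N :=
    fun z hz => my_pSpan_le (isPSub_Csub N hpm hp) (fun y hy => DD_one_le_Csub N hy) hz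
  have hZN : ∀ z ∈ Z, z ∈ N := fun z hz => hCN z (hZC z hz)
  have hDZ : ∀ x ∈ DD N 1, x ∈ Z := fun x hx => my_subset_pSpan pm _ hx
  by_cases hZM : ∀ z ∈ Z, z ∈ M
  · exact fun x hx => hZM x (hDZ x hx)
  push_neg at hZM
  obtain ⟨z0, hz0, hz0M⟩ := hZM
  -- the subalgebra T = M + Z
  have hbr : ∀ u ∈ M.toSubmodule ⊔ Z.toSubmodule, ∀ v ∈ M.toSubmodule ⊔ Z.toSubmodule,
      ⁅u, v⁆ ∈ M.toSubmodule ⊔ Z.toSubmodule := by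
    intro u hu v hv
    rcases Submodule.mem_sup.mp hu with ⟨m1, hm1, z1, hz1, rfl⟩
    rcases Submodule.mem_sup.mp hv with ⟨m2, hm2, z2, hz2, rfl⟩
    rw [add_lie, lie_add, lie_add]
    have t1 : ⁅m1, m2⁆ ∈ M.toSubmodule ⊔ Z.toSubmodule :=
      Submodule.mem_sup_left (M.lie_mem hm1 hm2)
    have t2 : ⁅m1, z2⁆ ∈ M.toSubmodule ⊔ Z.toSubmodule := by
      refine Submodule.mem_sup_right (?_ : _ ∈ Z.toSubmodule)
      rw [← lie_skew]
      exact neg_mem (hDZ _ ((hZC z2 hz2).1 m1))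
    have t3 : ⁅z1, m2⁆ ∈ M.toSubmodule ⊔ Z.toSubmodule :=
      Submodule.mem_sup_right (hDZ _ ((hZC z1 hz1).1 m2))
    have t4 : ⁅z1, z2⁆ ∈ M.toSubmodule ⊔ Z.toSubmodule :=
      Submodule.mem_sup_right (Z.lie_mem hz1 hz2)
    exact add_mem (add_mem t1 t2) (add_mem t3 t4)
  let T : LieSubalgebra F L :=
    { M.toSubmodule ⊔ Z.toSubmodule with
      lie_mem' := fun {u v} hu hv => hbr u hu v hv }
  have hMT : M ≤ T := fun m hm => Submodule.mem_sup_left hm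
  have hTp : IsPSub F pm T := by
    intro u hu
    rcases Submodule.mem_sup.mp hu with ⟨m, hm, z, hz, rfl⟩
    have h1 : pm m ∈ T := hMT (hM.1 m hm)
    have h2 : pm z ∈ T := Submodule.mem_sup_right (hZp z hz)
    have h3 : pm (m + z) - pm m - pm z ∈ T := by
      have hadd := hpm.add_pm m z
      have hspan : LieSubalgebra.lieSpan F L {m, z} ≤ T := by
        rw [LieSubalgebra.lieSpan_le]
        rintro w (rfl | rfl)
        · exact Submodule.mem_sup_left hm
        · exact Submodule.mem_sup_right hz
      exact hspan hadd
    have heq : pm (m + z) = pm (m + z) - pm m - pm z + pm m + pm z := by abel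
    rw [heq]
    exact add_mem (add_mem h3 h1) h2
  have hMltT : M < T := by
    refine lt_of_le_of_ne hMT fun he => hz0M ?_
    rw [he]
    exact Submodule.mem_sup_right hz0
  have hTtop : T = ⊤ := hM.2.2 T hTp hMltT
  -- decomposition of elements of N
  set W : Submodule F L := M.toSubmodule ⊓ LieSubmodule.toSubmodule N with hWdef
  have hdec : ∀ n ∈ N, ∃ w ∈ W, ∃ z, z ∈ Csub N ∧ n = w + z := by
    intro n hn
    have hnT : n ∈ T := hTtop ▸ trivial
    rcases Submodule.mem_sup.mp hnT with ⟨m, hm, z, hz, rfl⟩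
    have hzC := hZC z hz
    have hzN : z ∈ N := hCN z hzC
    have hmN : m ∈ N := by
      have : m = m + z - z := by abel
      rw [this]
      exact sub_mem hn hzN
    exact ⟨m, ⟨hm, hmN⟩, z, hzC, rfl⟩
  -- the descent
  have hWlie : ∀ w ∈ W, ∀ w' ∈ W, ⁅w, w'⁆ ∈ W := by
    intro w hw w' hw'
    exact ⟨M.lie_mem hw.1 hw'.1, N.lie_mem hw'.2⟩
  have hQ : ∀ k, LieSubmodule.toSubmodule (DD N (k + 1)) ≤
      (W ⊓ LieSubmodule.toSubmodule (DD N (k + 1))) ⊔ LieSubmodule.toSubmodule (DD N (k + 2)) := by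
    intro k
    induction k with
    | zero =>
      have h1 : DD N 1 = ⁅N, DD N 0⁆ := DD_succ N 0
      conv_lhs => rw [h1, LieSubmodule.lieIdeal_oper_eq_linear_span']
      rw [Submodule.span_le]
      rintro _ ⟨u, hu, v, hv, rfl⟩
      have hv0 : v ∈ N := hv
      obtain ⟨w, hw, z, hzC, rfl⟩ := hdec u hu
      obtain ⟨w', hw', z', hz'C, rfl⟩ := hdec v hv0
      rw [add_lie, lie_add, lie_add]
      have t1 : ⁅w, w'⁆ ∈ (W ⊓ LieSubmodule.toSubmodule (DD N 1)) ⊔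
          LieSubmodule.toSubmodule (DD N 2) := by
        refine Submodule.mem_sup_left ⟨hWlie w hw w' hw', ?_⟩
        exact lie_mem_DD N hw.2 (show w' ∈ DD N 0 from hw'.2)
      have t2 : ⁅w, z'⁆ ∈ (W ⊓ LieSubmodule.toSubmodule (DD N 1)) ⊔
          LieSubmodule.toSubmodule (DD N 2) := by
        refine Submodule.mem_sup_right ?_
        have : ⁅z', w⁆ ∈ DD N 2 := hz'C.2 0 w hw.2
        rw [← lie_skew]
        exact neg_mem this
      have t3 : ⁅z, w'⁆ ∈ (W ⊓ LieSubmodule.toSubmodule (DD N 1)) ⊔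
          LieSubmodule.toSubmodule (DD N 2) :=
        Submodule.mem_sup_right (hzC.2 0 w' hw'.2)
      have t4 : ⁅z, z'⁆ ∈ (W ⊓ LieSubmodule.toSubmodule (DD N 1)) ⊔
          LieSubmodule.toSubmodule (DD N 2) :=
        Submodule.mem_sup_right (hzC.2 0 z' (hCN z' hz'C))
      exact add_mem (add_mem t1 t2) (add_mem t3 t4)
    | succ k ih =>
      have h1 : DD N (k + 2) = ⁅N, DD N (k + 1)⁆ := DD_succ N (k + 1)
      conv_lhs => rw [h1, LieSubmodule.lieIdeal_oper_eq_linear_span']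
      rw [Submodule.span_le]
      rintro _ ⟨u, hu, v, hv, rfl⟩
      have hv' : v ∈ LieSubmodule.toSubmodule (DD N (k + 1)) := hv
      rcases Submodule.mem_sup.mp (ih hv') with ⟨a, ha, b, hb, rfl⟩
      obtain ⟨w, hw, z, hzC, rfl⟩ := hdec u hu
      rw [add_lie, lie_add, lie_add]
      have t1 : ⁅w, a⁆ ∈ (W ⊓ LieSubmodule.toSubmodule (DD N (k + 2))) ⊔
          LieSubmodule.toSubmodule (DD N (k + 3)) := by
        refine Submodule.mem_sup_left ⟨hWlie w hw a ha.1, ?_⟩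
        exact lie_mem_DD N hw.2 ha.2
      have t2 : ⁅w, b⁆ ∈ (W ⊓ LieSubmodule.toSubmodule (DD N (k + 2))) ⊔
          LieSubmodule.toSubmodule (DD N (k + 3)) :=
        Submodule.mem_sup_right (lie_mem_DD N hw.2 hb)
      have t3 : ⁅z, a⁆ ∈ (W ⊓ LieSubmodule.toSubmodule (DD N (k + 2))) ⊔
          LieSubmodule.toSubmodule (DD N (k + 3)) :=
        Submodule.mem_sup_right (hzC.2 (k + 1) a ha.2)
      have t4 : ⁅z, b⁆ ∈ (W ⊓ LieSubmodule.toSubmodule (DD N (k + 2))) ⊔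
          LieSubmodule.toSubmodule (DD N (k + 3)) :=
        Submodule.mem_sup_right (DD_antitone N (by omega) (hzC.2 (k + 2) b hb))
      exact add_mem (add_mem t1 t2) (add_mem t3 t4)
  have hchain : ∀ k, LieSubmodule.toSubmodule (DD N 1) ≤
      W ⊔ LieSubmodule.toSubmodule (DD N (k + 1)) := by
    intro k
    induction k with
    | zero => exact le_sup_right
    | succ k ih =>
      refine ih.trans (sup_le le_sup_left ((hQ k).trans (sup_le ?_ le_sup_right)))
      exact inf_le_left.trans le_sup_left
  obtain ⟨K, hK⟩ := hbot
  intro x hx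
  have hxW : x ∈ W ⊔ LieSubmodule.toSubmodule (DD N (K + 1)) := hchain K hx
  have hKb : LieSubmodule.toSubmodule (DD N (K + 1)) = ⊥ := by
    rw [eq_bot_iff]
    intro y hy
    have : y ∈ (⊥ : LieIdeal F L) := hK ▸ DD_succ_le N K hy
    simpa using this
  rw [hKb, sup_bot_eq] at hxW
  exact hxW.1

end MyAux3

/-- the nilradical of a dually atomistic restricted Lie algebra is abelian. -/
theorem nilradical_abelian_of_duallyAtomisticP
    (F : Type*) [Field F] (L : Type*) [LieRing L] [LieAlgebra F L]
    [FiniteDimensional F L] (p : ℕ) [Fact p.Prime] [CharP F p]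
    (pm : L → L) (hpm : IsPMapping F L p pm)
    (h : DuallyAtomisticP F L pm)
    (N : LieIdeal F L) (hN : IsNilradical F L N) :
    IsLieAbelian N := by
  have hp : 0 < p := (Fact.out : p.Prime).pos
  have hpm0 : pm 0 = 0 := by
    have h0 := hpm.smul_pow 0 0
    rw [zero_smul, zero_pow hp.ne', zero_smul] at h0
    exact h0
  obtain ⟨𝓜, h𝓜, hbot⟩ := h ⊥ (by
    intro x hx
    rw [LieSubalgebra.mem_bot] at hx
    subst hx
    rw [hpm0]
    exact (LieSubalgebra.mem_bot (R := F) (L := L) 0).mpr rfl)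
  have key : ∀ x ∈ DD N 1, x = 0 := by
    intro x hx
    have hxM : x ∈ sInf 𝓜 :=
      my_mem_sInf.mpr fun M hM => DD_one_le_max hpm hp N hN (h𝓜 M hM) x hx
    rw [← hbot] at hxM
    rwa [LieSubalgebra.mem_bot] at hxM
  constructor
  intro a b
  have hab : ((⁅a, b⁆ : ↥N) : L) = ⁅(a : L), (b : L)⁆ := rfl
  have hmem : ⁅(a : L), (b : L)⁆ ∈ DD N 1 :=
    lie_mem_DD N a.2 (show (b : L) ∈ DD N 0 from b.2)
  exact Subtype.ext (by rw [hab]; exact key _ hmem)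
end

section
/- Let L be a dually atomistic restricted Lie algebra. Then for every maximal restricted subalgebra M of L, the intersection M ∩ N(L) is a restricted ideal of L, where N(L) is the nilradical. -/
open LieAlgebra Module

section AuxNilrad

variable {F : Type*} [Field F] {L : Type*} [LieRing L] [LieAlgebra F L]

/-- The chain `I, ⁅I,I⁆, ⁅I,⁅I,I⁆⁆, ...` of a Lie ideal, as ideals of `L`. -/
def idlcs (I : LieIdeal F L) : ℕ → LieIdeal F L := fun k => (fun X => ⁅I, X⁆)^[k] I

lemma idlcs_zero (I : LieIdeal F L) : idlcs I 0 = I := rfl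

lemma idlcs_succ (I : LieIdeal F L) (k : ℕ) : idlcs I (k + 1) = ⁅I, idlcs I k⁆ :=
  Function.iterate_succ_apply' _ _ _

lemma idlcs_succ_le (I : LieIdeal F L) (k : ℕ) : idlcs I (k + 1) ≤ idlcs I k := by
  rw [idlcs_succ]; exact LieSubmodule.lie_le_right _ _

lemma idlcs_le (I : LieIdeal F L) {a b : ℕ} (hab : a ≤ b) : idlcs I b ≤ idlcs I a := by
  induction b with
  | zero => simp_all
  | succ b ih =>
    rcases Nat.lt_or_ge a (b + 1) with hlt | hge
    · exact le_trans (idlcs_succ_le I b) (ih (Nat.lt_succ_iff.mp hlt))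
    · have : a = b + 1 := le_antisymm hab hge
      subst this; exact le_rfl

lemma idlcs_le_self (I : LieIdeal F L) (k : ℕ) : idlcs I k ≤ I :=
  idlcs_zero I ▸ idlcs_le I (Nat.zero_le k)

lemma idlcs_map_eq (I : LieIdeal F L) (k : ℕ) :
    LieSubmodule.map (LieSubmodule.incl I) (LieIdeal.lcs I (↥I) k) = idlcs I k := by
  induction k with
  | zero => exact LieSubmodule.map_incl_top (N := (I : LieSubmodule F L L))
  | succ k ih => rw [LieIdeal.lcs_succ, LieSubmodule.map_bracket_eq, ih, idlcs_succ]

lemma isNilpotent_iff_idlcs (I : LieIdeal F L) :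
    LieModule.IsNilpotent I I ↔ ∃ k, idlcs I k = ⊥ := by
  rw [LieModule.isNilpotent_iff F]
  constructor
  · rintro ⟨k, hk⟩
    refine ⟨k, ?_⟩
    have h1 : LieSubmodule.toSubmodule (LieIdeal.lcs I (↥I) k) = ⊥ := by
      rw [LieIdeal.coe_lcs_eq, hk]; rfl
    have h2 : LieIdeal.lcs I (↥I) k = ⊥ := by
      rw [← LieSubmodule.toSubmodule_inj, h1]; simp
    rw [← idlcs_map_eq, h2]
    simp
  · rintro ⟨k, hk⟩
    have h2 : LieIdeal.lcs I (↥I) k = ⊥ := by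
      rw [eq_bot_iff]
      intro m hm
      have : LieSubmodule.incl I m ∈
          LieSubmodule.map (LieSubmodule.incl I) (LieIdeal.lcs I (↥I) k) := ⟨m, hm, rfl⟩
      rw [idlcs_map_eq, hk] at this
      have hm0 : (m : L) = 0 := this
      simp only [LieSubmodule.mem_bot]
      exact Subtype.ext hm0
    refine ⟨k, ?_⟩
    have h1 := LieIdeal.coe_lcs_eq I (↥I) k
    rw [h2] at h1
    rw [eq_bot_iff]
    intro m hm
    have : m ∈ LieSubmodule.toSubmodule (LieModule.lowerCentralSeries F (↥I) (↥I) k) := hm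
    rw [← h1] at this
    simpa using this

variable {p : ℕ} {pm : L → L}

lemma ad_pow_succ_mem (S : LieSubmodule F L L) {x z : L} (h : ⁅x, z⁆ ∈ S) (q : ℕ) :
    ((LieAlgebra.ad F L x) ^ (q + 1)) z ∈ S := by
  induction q with
  | zero => simpa using h
  | succ q ih =>
    rw [pow_succ']
    exact S.lie_mem ih

/-- The workhorse: if `⁅x, z⁆` lands in an ideal `S`, then so does `⁅pm x, z⁆`. -/
lemma pmBracket_mem (hp : p ≠ 0) (hpm : IsPMapping F L p pm) (S : LieSubmodule F L L)
    {x z : L} (h : ⁅x, z⁆ ∈ S) : ⁅pm x, z⁆ ∈ S := by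
  obtain ⟨q, rfl⟩ := Nat.exists_eq_succ_of_ne_zero hp
  rw [hpm.ad_pow]
  exact ad_pow_succ_mem S h q

lemma pm_zero (hp : p ≠ 0) (hpm : IsPMapping F L p pm) : pm 0 = 0 := by
  have := hpm.smul_pow 0 0
  simpa [zero_pow hp] using this

lemma pm_add_mem (hpm : IsPMapping F L p pm) {S : LieSubalgebra F L} {a b : L}
    (ha : a ∈ S) (hb : b ∈ S) (hpa : pm a ∈ S) (hpb : pm b ∈ S) : pm (a + b) ∈ S := by
  have hδ : pm (a + b) - pm a - pm b ∈ S := by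
    refine LieSubalgebra.lieSpan_le.mpr ?_ (hpm.add_pm a b)
    rw [Set.insert_subset_iff, Set.singleton_subset_iff]
    exact ⟨ha, hb⟩
  have hrw : pm (a + b) = (pm (a + b) - pm a - pm b) + pm a + pm b := by abel
  rw [hrw]
  exact S.add_mem (S.add_mem hδ hpa) hpb

/-- Left multiplication into an ideal. -/
lemma ideal_lie_mem_left (S : LieSubmodule F L L) {z : L} (hz : z ∈ S) (x : L) :
    ⁅z, x⁆ ∈ S := by
  rw [← lie_skew]
  exact neg_mem (S.lie_mem hz)

/-- `⁅ idlcs a, idlcs b ⁆ ⊆ idlcs (a+b+1)`, elementwise. -/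
lemma lie_mem_idlcs_add (N : LieIdeal F L) :
    ∀ (a : ℕ) {b : ℕ} {z w : L}, z ∈ idlcs N a → w ∈ idlcs N b →
      ⁅z, w⁆ ∈ idlcs N (a + b + 1) := by
  intro a
  induction a with
  | zero =>
    intro b z w hz hw
    have : ⁅z, w⁆ ∈ ⁅N, idlcs N b⁆ := LieSubmodule.lie_mem_lie hz hw
    rwa [← idlcs_succ, (by omega : b + 1 = 0 + b + 1)] at this
  | succ a ih =>
    intro b z w hz hw
    have hz' : z ∈ Submodule.span F {m | ∃ x ∈ N, ∃ n ∈ idlcs N a, ⁅x, n⁆ = m} := by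
      rw [← LieSubmodule.lieIdeal_oper_eq_linear_span']
      rw [idlcs_succ] at hz
      exact hz
    refine Submodule.span_induction
      (p := fun z _ => ⁅z, w⁆ ∈ idlcs N (a + 1 + b + 1)) ?_ ?_ ?_ ?_ hz'
    · rintro _ ⟨x, hx, n, hn, rfl⟩
      have h1 : ⁅x, ⁅n, w⁆⁆ ∈ idlcs N (a + 1 + b + 1) := by
        have := LieSubmodule.lie_mem_lie hx (ih hn hw)
        rwa [← idlcs_succ, (by omega : a + b + 1 + 1 = a + 1 + b + 1)] at this
      have h2 : ⁅n, ⁅x, w⁆⁆ ∈ idlcs N (a + 1 + b + 1) := by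
        have hxw : ⁅x, w⁆ ∈ idlcs N (b + 1) := by
          have := LieSubmodule.lie_mem_lie hx hw
          rwa [← idlcs_succ] at this
        have := ih hn hxw
        rwa [(by omega : a + (b + 1) + 1 = a + 1 + b + 1)] at this
      rw [lie_lie]
      exact sub_mem h1 h2
    · simp
    · intro u v _ _ hu hv
      rw [add_lie]; exact add_mem hu hv
    · intro c u _ hu
      rw [smul_lie]; exact (idlcs N (a + 1 + b + 1)).smul_mem c hu

/-- The nilradical is closed under the `p`-mapping. -/
lemma pm_mem_nilrad (hp : p ≠ 0) (hpm : IsPMapping F L p pm)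
    {N : LieIdeal F L} (hN1 : LieModule.IsNilpotent N N)
    (hN2 : ∀ I : LieIdeal F L, LieModule.IsNilpotent I I → I ≤ N)
    {y : L} (hy : y ∈ N) : pm y ∈ N := by
  set Jsub : Submodule F L := (N : Submodule F L) ⊔ (F ∙ pm y) with hJsub
  have hJlie : ∀ (x m : L), m ∈ Jsub → ⁅x, m⁆ ∈ Jsub := by
    intro x m hm
    obtain ⟨n, hn, s, hs, rfl⟩ := Submodule.mem_sup.mp hm
    obtain ⟨c, rfl⟩ := Submodule.mem_span_singleton.mp hs
    rw [lie_add, lie_smul]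
    refine add_mem (Submodule.mem_sup_left (N.lie_mem hn)) (Submodule.smul_mem _ c ?_)
    have h2 : ⁅pm y, x⁆ ∈ N := pmBracket_mem hp hpm _ (ideal_lie_mem_left _ hy x)
    rw [← lie_skew]
    exact Submodule.mem_sup_left ((N : Submodule F L).neg_mem h2)
  set J : LieIdeal F L := { toSubmodule := Jsub, lie_mem := fun {x m} hm => hJlie x m hm } with hJ
  have hmemJ : ∀ z : L, z ∈ J ↔ z ∈ Jsub := fun z => Iff.rfl
  obtain ⟨c, hc⟩ := (isNilpotent_iff_idlcs N).mp hN1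
  have key : ∀ k, idlcs J (k + 1) ≤ idlcs N k := by
    intro k
    induction k with
    | zero =>
      rw [idlcs_succ, LieSubmodule.lie_le_iff]
      intro x hx m _
      obtain ⟨n, hn, s, hs, rfl⟩ := Submodule.mem_sup.mp ((hmemJ x).mp hx)
      obtain ⟨cc, rfl⟩ := Submodule.mem_span_singleton.mp hs
      rw [add_lie, smul_lie]
      refine add_mem ?_ (Submodule.smul_mem _ cc ?_)
      · exact ideal_lie_mem_left (N : LieSubmodule F L L) hn m
      · exact pmBracket_mem hp hpm _ (ideal_lie_mem_left _ hy m)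
    | succ k ih =>
      rw [idlcs_succ, LieSubmodule.lie_le_iff]
      intro x hx d hd
      have hd' : d ∈ idlcs N k := ih hd
      obtain ⟨n, hn, s, hs, rfl⟩ := Submodule.mem_sup.mp ((hmemJ x).mp hx)
      obtain ⟨cc, rfl⟩ := Submodule.mem_span_singleton.mp hs
      rw [add_lie, smul_lie]
      refine add_mem ?_ (Submodule.smul_mem _ cc ?_)
      · rw [idlcs_succ]
        exact LieSubmodule.lie_mem_lie hn hd'
      · refine pmBracket_mem hp hpm _ ?_
        rw [idlcs_succ]
        exact LieSubmodule.lie_mem_lie hy hd'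
  have hJnil : LieModule.IsNilpotent J J :=
    (isNilpotent_iff_idlcs J).mpr ⟨c + 1, le_bot_iff.mp (hc ▸ key c)⟩
  exact hN2 J hJnil (Submodule.mem_sup_right (Submodule.mem_span_singleton_self _))

lemma pm_iter_mem_nilrad (hp : p ≠ 0) (hpm : IsPMapping F L p pm)
    {N : LieIdeal F L} (hN1 : LieModule.IsNilpotent N N)
    (hN2 : ∀ I : LieIdeal F L, LieModule.IsNilpotent I I → I ≤ N)
    {y : L} (hy : y ∈ N) (m : ℕ) : pm^[m] y ∈ N := by
  induction m with
  | zero => simpa using hy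
  | succ m ih =>
    rw [Function.iterate_succ_apply']
    exact pm_mem_nilrad hp hpm hN1 hN2 ih

end AuxNilrad


set_option maxHeartbeats 2000000 in
/-- for a dually atomistic restricted Lie algebra, the intersection of any
maximal restricted subalgebra with the nilradical is a restricted ideal. -/
theorem maxPSub_inf_nilradical_is_restricted_ideal
    (F : Type*) [Field F] (L : Type*) [LieRing L] [LieAlgebra F L]
    [FiniteDimensional F L] (p : ℕ) [Fact p.Prime] [CharP F p]
    (pm : L → L) (hpm : IsPMapping F L p pm)
    (h : DuallyAtomisticP F L pm)
    (N : LieIdeal F L) (hN : IsNilradical F L N)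
    (M : LieSubalgebra F L) (hM : IsMaxPSub F pm M) :
    (∀ (x : L) (y : L), y ∈ M → y ∈ N → ⁅x, y⁆ ∈ M ∧ ⁅x, y⁆ ∈ N) ∧
      (∀ y : L, y ∈ M → y ∈ N → pm y ∈ M ∧ pm y ∈ N) := by
  have hp : p ≠ 0 := (Fact.out : p.Prime).ne_zero
  have hpmN : ∀ {y : L}, y ∈ N → pm y ∈ N := fun hy => pm_mem_nilrad hp hpm hN.1 hN.2 hy
  refine ⟨?_, fun y hyM hyN => ⟨hM.1 y hyM, hpmN hyN⟩⟩
  intro x y hyM hyN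
  refine ⟨?_, N.lie_mem hyN⟩
  by_cases hNM : ∀ n ∈ (N : LieSubmodule F L L), n ∈ M
  · exact hNM _ (N.lie_mem hyN)
  push_neg at hNM
  obtain ⟨n₀, hn₀N, hn₀M⟩ := hNM
  -- `M + N` is a restricted subalgebra properly containing `M`, hence is all of `L`.
  have hMNlie : ∀ a b : L, a ∈ M.toSubmodule ⊔ LieSubmodule.toSubmodule (N : LieSubmodule F L L) →
      b ∈ M.toSubmodule ⊔ LieSubmodule.toSubmodule (N : LieSubmodule F L L) →
      ⁅a, b⁆ ∈ M.toSubmodule ⊔ LieSubmodule.toSubmodule (N : LieSubmodule F L L) := by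
    intro a b ha hb
    obtain ⟨m₁, hm₁, n₁, hn₁, rfl⟩ := Submodule.mem_sup.mp ha
    obtain ⟨m₂, hm₂, n₂, hn₂, rfl⟩ := Submodule.mem_sup.mp hb
    rw [add_lie, lie_add, lie_add]
    refine add_mem (add_mem ?_ ?_) (add_mem ?_ ?_)
    · exact Submodule.mem_sup_left (M.lie_mem hm₁ hm₂)
    · exact Submodule.mem_sup_right (N.lie_mem hn₂)
    · exact Submodule.mem_sup_right (ideal_lie_mem_left _ hn₁ m₂)
    · exact Submodule.mem_sup_right (ideal_lie_mem_left _ hn₁ n₂)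
  set MN : LieSubalgebra F L :=
    { toSubmodule := M.toSubmodule ⊔ LieSubmodule.toSubmodule (N : LieSubmodule F L L),
      lie_mem' := fun {a b} ha hb => hMNlie a b ha hb } with hMN
  have hmemMN : ∀ z : L, z ∈ MN ↔ z ∈ M.toSubmodule ⊔ LieSubmodule.toSubmodule (N : LieSubmodule F L L) := fun _ => Iff.rfl
  have hMNp : IsPSub F pm MN := by
    intro v hv
    obtain ⟨m, hm, n, hn, rfl⟩ := Submodule.mem_sup.mp ((hmemMN v).mp hv)
    refine pm_add_mem hpm ((hmemMN m).mpr (Submodule.mem_sup_left hm))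
      ((hmemMN n).mpr (Submodule.mem_sup_right hn))
      ((hmemMN _).mpr (Submodule.mem_sup_left (hM.1 m hm)))
      ((hmemMN _).mpr (Submodule.mem_sup_right (hpmN hn)))
  have hMNtop : MN = ⊤ := by
    refine hM.2.2 MN hMNp (lt_of_le_of_ne (fun z hz => Submodule.mem_sup_left hz) ?_)
    intro heq
    exact hn₀M (by rw [heq]; exact (hmemMN n₀).mpr (Submodule.mem_sup_right hn₀N))
  have hxMN : x ∈ MN := by rw [hMNtop]; trivial
  obtain ⟨m, hm, n, hn, rfl⟩ := Submodule.mem_sup.mp ((hmemMN x).mp hxMN)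
  rw [add_lie]
  refine M.add_mem (M.lie_mem hm hyM) ?_
  -- it remains to show `⁅n, y⁆ ∈ M` with `n, y ∈ N`; in fact `⁅N, N⁆ ⊆ M`.
  have hnyD : ⁅n, y⁆ ∈ idlcs N 1 := by
    rw [idlcs_succ]
    exact LieSubmodule.lie_mem_lie hn hyN
  by_cases hD1 : ∀ v ∈ idlcs N 1, v ∈ M
  · exact hD1 _ hnyD
  push_neg at hD1
  obtain ⟨z₀, hz₀D, hz₀M⟩ := hD1
  exfalso
  -- the restricted closure `K` of `⁅N, N⁆`
  set G : Set L := {w | ∃ x ∈ idlcs N 1, ∃ m : ℕ, w = pm^[m + 1] x} with hG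
  set Ksub : Submodule F L := LieSubmodule.toSubmodule (idlcs N 1) ⊔ Submodule.span F G with hKsub
  have hKN : ∀ v ∈ Ksub, v ∈ N := by
    have hsp : Submodule.span F G ≤ LieSubmodule.toSubmodule (N : LieSubmodule F L L) := by
      refine Submodule.span_le.mpr ?_
      rintro w ⟨xx, hxx, mm, rfl⟩
      exact pm_iter_mem_nilrad hp hpm hN.1 hN.2 (idlcs_le_self N 1 hxx) (mm + 1)
    intro v hv
    obtain ⟨a, ha, b, hb, rfl⟩ := Submodule.mem_sup.mp hv
    exact add_mem (idlcs_le_self N 1 ha) (hsp hb)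
  have hGen : ∀ (mm : ℕ) (xx : L), xx ∈ idlcs N 1 →
      ∀ (j : ℕ) (d : L), d ∈ idlcs N j → ⁅pm^[mm + 1] xx, d⁆ ∈ idlcs N (j + 2) := by
    intro mm
    induction mm with
    | zero =>
      intro xx hxx j d hd
      refine pmBracket_mem hp hpm _ ?_
      have := lie_mem_idlcs_add N 1 hxx hd
      rwa [(by omega : 1 + j + 1 = j + 2)] at this
    | succ mm ih =>
      intro xx hxx j d hd
      rw [Function.iterate_succ_apply']
      exact pmBracket_mem hp hpm _ (ih xx hxx j d hd)
  have hK2 : ∀ v ∈ Ksub, ∀ (j : ℕ) (d : L), d ∈ idlcs N j → ⁅v, d⁆ ∈ idlcs N (j + 2) := by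
    intro v hv
    obtain ⟨a, ha, b, hb, rfl⟩ := Submodule.mem_sup.mp hv
    have hA : ∀ (j : ℕ) (d : L), d ∈ idlcs N j → ⁅a, d⁆ ∈ idlcs N (j + 2) := by
      intro j d hd
      have := lie_mem_idlcs_add N 1 ha hd
      rwa [(by omega : 1 + j + 1 = j + 2)] at this
    have hB : ∀ (j : ℕ) (d : L), d ∈ idlcs N j → ⁅b, d⁆ ∈ idlcs N (j + 2) := by
      refine Submodule.span_induction
        (p := fun b _ => ∀ (j : ℕ) (d : L), d ∈ idlcs N j → ⁅b, d⁆ ∈ idlcs N (j + 2))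
        ?_ ?_ ?_ ?_ hb
      · rintro _ ⟨xx, hxx, mm, rfl⟩
        exact hGen mm xx hxx
      · intro j d hd; rw [zero_lie]; exact zero_mem _
      · intro u v _ _ hu hv j d hd
        rw [add_lie]; exact add_mem (hu j d hd) (hv j d hd)
      · intro cc u _ hu j d hd
        rw [smul_lie]; exact (idlcs N (j + 2)).smul_mem cc (hu j d hd)
    intro j d hd
    rw [add_lie]
    exact add_mem (hA j d hd) (hB j d hd)
  have hGen' : ∀ (mm : ℕ) (xx : L), xx ∈ idlcs N 1 →
      ∀ l : L, ⁅pm^[mm + 1] xx, l⁆ ∈ idlcs N 1 := by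
    intro mm
    induction mm with
    | zero =>
      intro xx hxx l
      exact pmBracket_mem hp hpm _ (ideal_lie_mem_left _ hxx l)
    | succ mm ih =>
      intro xx hxx l
      rw [Function.iterate_succ_apply']
      exact pmBracket_mem hp hpm _ (ih xx hxx l)
  have hK2' : ∀ v ∈ Ksub, ∀ l : L, ⁅v, l⁆ ∈ idlcs N 1 := by
    intro v hv
    obtain ⟨a, ha, b, hb, rfl⟩ := Submodule.mem_sup.mp hv
    have hB : ∀ l : L, ⁅b, l⁆ ∈ idlcs N 1 := by
      refine Submodule.span_induction
        (p := fun b _ => ∀ l : L, ⁅b, l⁆ ∈ idlcs N 1) ?_ ?_ ?_ ?_ hb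
      · rintro _ ⟨xx, hxx, mm, rfl⟩
        exact hGen' mm xx hxx
      · intro l; rw [zero_lie]; exact zero_mem _
      · intro u v _ _ hu hv l
        rw [add_lie]; exact add_mem (hu l) (hv l)
      · intro cc u _ hu l
        rw [smul_lie]; exact (idlcs N 1).smul_mem cc (hu l)
    intro l
    rw [add_lie]
    exact add_mem (ideal_lie_mem_left _ ha l) (hB l)
  have hKlie : ∀ a b : L, a ∈ Ksub → b ∈ Ksub → ⁅a, b⁆ ∈ Ksub := by
    intro a b ha hb
    exact Submodule.mem_sup_left (hK2' a ha b)
  set KS : LieSubalgebra F L :=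
    { toSubmodule := Ksub, lie_mem' := fun {a b} ha hb => hKlie a b ha hb } with hKS
  have hmemKS : ∀ z : L, z ∈ KS ↔ z ∈ Ksub := fun _ => Iff.rfl
  have hGmem : ∀ w ∈ G, w ∈ Ksub := fun w hw =>
    Submodule.mem_sup_right (Submodule.subset_span hw)
  have hKpm : ∀ v ∈ Ksub, pm v ∈ Ksub := by
    have hspan : ∀ b ∈ Submodule.span F G, pm b ∈ Ksub := by
      intro b hb
      refine Submodule.span_induction (p := fun b _ => pm b ∈ Ksub) ?_ ?_ ?_ ?_ hb
      · rintro _ ⟨xx, hxx, mm, rfl⟩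
        have : pm (pm^[mm + 1] xx) = pm^[mm + 1 + 1] xx :=
          (Function.iterate_succ_apply' pm (mm + 1) xx).symm
        rw [this]
        exact hGmem _ ⟨xx, hxx, mm + 1, rfl⟩
      · show pm (0 : L) ∈ Ksub
        rw [pm_zero hp hpm]; exact zero_mem _
      · intro u v hu hv hu' hv'
        exact (hmemKS _).mp (pm_add_mem hpm ((hmemKS u).mpr (Submodule.mem_sup_right hu))
          ((hmemKS v).mpr (Submodule.mem_sup_right hv))
          ((hmemKS _).mpr hu') ((hmemKS _).mpr hv'))
      · intro cc u _ hu
        rw [hpm.smul_pow]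
        exact Submodule.smul_mem _ _ hu
    intro v hv
    obtain ⟨a, ha, b, hb, rfl⟩ := Submodule.mem_sup.mp hv
    have hpa : pm a ∈ Ksub := hGmem _ ⟨a, ha, 0, rfl⟩
    exact (hmemKS _).mp (pm_add_mem hpm ((hmemKS a).mpr (Submodule.mem_sup_left ha))
      ((hmemKS b).mpr (Submodule.mem_sup_right hb))
      ((hmemKS _).mpr hpa) ((hmemKS _).mpr (hspan b hb)))
  -- `M + K` is a restricted subalgebra properly containing `M`, hence is all of `L`.
  have hMKlie : ∀ a b : L, a ∈ M.toSubmodule ⊔ Ksub → b ∈ M.toSubmodule ⊔ Ksub →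
      ⁅a, b⁆ ∈ M.toSubmodule ⊔ Ksub := by
    intro a b ha hb
    obtain ⟨m₁, hm₁, k₁, hk₁, rfl⟩ := Submodule.mem_sup.mp ha
    obtain ⟨m₂, hm₂, k₂, hk₂, rfl⟩ := Submodule.mem_sup.mp hb
    rw [add_lie, lie_add, lie_add]
    refine add_mem (add_mem ?_ ?_) (add_mem ?_ ?_)
    · exact Submodule.mem_sup_left (M.lie_mem hm₁ hm₂)
    · rw [← lie_skew]
      exact Submodule.mem_sup_right (Ksub.neg_mem (Submodule.mem_sup_left (hK2' k₂ hk₂ m₁)))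
    · exact Submodule.mem_sup_right (Submodule.mem_sup_left (hK2' k₁ hk₁ m₂))
    · exact Submodule.mem_sup_right (Submodule.mem_sup_left (hK2' k₁ hk₁ k₂))
  set MK : LieSubalgebra F L :=
    { toSubmodule := M.toSubmodule ⊔ Ksub,
      lie_mem' := fun {a b} ha hb => hMKlie a b ha hb } with hMK
  have hmemMK : ∀ z : L, z ∈ MK ↔ z ∈ M.toSubmodule ⊔ Ksub := fun _ => Iff.rfl
  have hMKp : IsPSub F pm MK := by
    intro v hv
    obtain ⟨m', hm', k', hk', rfl⟩ := Submodule.mem_sup.mp ((hmemMK v).mp hv)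
    refine pm_add_mem hpm ((hmemMK m').mpr (Submodule.mem_sup_left hm'))
      ((hmemMK k').mpr (Submodule.mem_sup_right hk'))
      ((hmemMK _).mpr (Submodule.mem_sup_left (hM.1 m' hm')))
      ((hmemMK _).mpr (Submodule.mem_sup_right (hKpm k' hk')))
  have hz₀K : z₀ ∈ Ksub := Submodule.mem_sup_left hz₀D
  have hMKtop : MK = ⊤ := by
    refine hM.2.2 MK hMKp (lt_of_le_of_ne (fun z hz => Submodule.mem_sup_left hz) ?_)
    intro heq
    exact hz₀M (by rw [heq]; exact (hmemMK z₀).mpr (Submodule.mem_sup_right hz₀K))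
  -- every element of `N` decomposes as `u + v` with `u ∈ M ⊓ N` and `v ∈ K`
  have hdecomp : ∀ nn : L, nn ∈ N →
      ∃ u v : L, (u ∈ M.toSubmodule ∧ u ∈ N) ∧ v ∈ Ksub ∧ nn = u + v := by
    intro nn hnn
    have : nn ∈ MK := by rw [hMKtop]; trivial
    obtain ⟨u, hu, v, hv, hsum⟩ := Submodule.mem_sup.mp ((hmemMK nn).mp this)
    have hvN : v ∈ N := hKN v hv
    have huN : u ∈ N := by
      have hueq : u = nn - v := by rw [← hsum]; abel
      rw [hueq]
      exact sub_mem hnn hvN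
    exact ⟨u, v, ⟨hu, huN⟩, hv, hsum.symm⟩
  set U : Submodule F L := M.toSubmodule ⊓ LieSubmodule.toSubmodule (N : LieSubmodule F L L) with hU
  -- key inclusion: each term of the series is contained in `(U ⊓ term) + next term`
  have hE : ∀ k : ℕ, LieSubmodule.toSubmodule (idlcs N (k + 1)) ≤
      (U ⊓ LieSubmodule.toSubmodule (idlcs N (k + 1))) ⊔ LieSubmodule.toSubmodule (idlcs N (k + 2)) := by
    intro k
    induction k with
    | zero =>
      have heq : LieSubmodule.toSubmodule (idlcs N (0 + 1)) =
          Submodule.span F {m' | ∃ x' ∈ N, ∃ n' ∈ idlcs N 0, ⁅x', n'⁆ = m'} := by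
        rw [idlcs_succ, LieSubmodule.lieIdeal_oper_eq_linear_span']
      refine le_trans (le_of_eq heq) (Submodule.span_le.mpr ?_)
      rintro _ ⟨xx, hxx, dd, hdd, rfl⟩
      obtain ⟨u, v, ⟨huM, huN⟩, hv, rfl⟩ := hdecomp xx hxx
      obtain ⟨u', v', ⟨hu'M, hu'N⟩, hv', rfl⟩ := hdecomp dd hdd
      show ⁅u + v, u' + v'⁆ ∈
        (U ⊓ LieSubmodule.toSubmodule (idlcs N (0 + 1))) ⊔ LieSubmodule.toSubmodule (idlcs N (0 + 2))
      rw [add_lie, lie_add, lie_add]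
      refine add_mem (add_mem ?_ ?_) (add_mem ?_ ?_)
      · refine Submodule.mem_sup_left (Submodule.mem_inf.mpr ⟨Submodule.mem_inf.mpr
          ⟨M.lie_mem huM hu'M, N.lie_mem hu'N⟩, ?_⟩)
        rw [idlcs_succ]
        exact LieSubmodule.lie_mem_lie huN hu'N
      · rw [← lie_skew]
        exact Submodule.mem_sup_right (neg_mem (hK2 v' hv' 0 u huN))
      · exact Submodule.mem_sup_right (hK2 v hv 0 u' hu'N)
      · exact Submodule.mem_sup_right (hK2 v hv 0 v' (hKN v' hv'))
    | succ k ih =>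
      have heq : LieSubmodule.toSubmodule (idlcs N (k + 1 + 1)) =
          Submodule.span F {m' | ∃ x' ∈ N, ∃ n' ∈ idlcs N (k + 1), ⁅x', n'⁆ = m'} := by
        rw [idlcs_succ, LieSubmodule.lieIdeal_oper_eq_linear_span']
      refine le_trans (le_of_eq heq) (Submodule.span_le.mpr ?_)
      rintro _ ⟨xx, hxx, dd, hdd, rfl⟩
      obtain ⟨u, v, ⟨huM, huN⟩, hv, rfl⟩ := hdecomp xx hxx
      have hdd2 : dd ∈ (U ⊓ LieSubmodule.toSubmodule (idlcs N (k + 1))) ⊔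
          LieSubmodule.toSubmodule (idlcs N (k + 2)) := ih hdd
      obtain ⟨u', hu', d', hd', rfl⟩ := Submodule.mem_sup.mp hdd2
      obtain ⟨hu'U, hu'D⟩ := Submodule.mem_inf.mp hu'
      obtain ⟨hu'M, hu'N⟩ := Submodule.mem_inf.mp hu'U
      show ⁅u + v, u' + d'⁆ ∈
        (U ⊓ LieSubmodule.toSubmodule (idlcs N (k + 1 + 1))) ⊔ LieSubmodule.toSubmodule (idlcs N (k + 1 + 2))
      rw [add_lie, lie_add, lie_add]
      refine add_mem (add_mem ?_ ?_) (add_mem ?_ ?_)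
      · refine Submodule.mem_sup_left (Submodule.mem_inf.mpr ⟨Submodule.mem_inf.mpr
          ⟨M.lie_mem huM hu'M, N.lie_mem hu'N⟩, ?_⟩)
        rw [idlcs_succ]
        exact LieSubmodule.lie_mem_lie huN hu'D
      · refine Submodule.mem_sup_right ?_
        have : ⁅u, d'⁆ ∈ idlcs N (k + 2 + 1) := by
          rw [idlcs_succ]
          exact LieSubmodule.lie_mem_lie huN hd'
        have h2 := idlcs_le N (by omega : k + 1 + 2 ≤ k + 2 + 1) this
        exact h2
      · exact Submodule.mem_sup_right (hK2 v hv (k + 1) u' hu'D)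
      · refine Submodule.mem_sup_right ?_
        exact idlcs_le N (by omega : k + 1 + 2 ≤ k + 2 + 2) (hK2 v hv (k + 2) d' hd')
  -- hence `⁅N, N⁆ ⊆ U + (any term)`, so `⁅N, N⁆ ⊆ U ⊆ M`: contradiction with `z₀`.
  have hchain : ∀ k : ℕ, LieSubmodule.toSubmodule (idlcs N 1) ≤
      U ⊔ LieSubmodule.toSubmodule (idlcs N (k + 1)) := by
    intro k
    induction k with
    | zero => exact le_sup_right
    | succ k ih =>
      refine le_trans ih (sup_le le_sup_left (le_trans (hE k) (sup_le ?_ le_sup_right)))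
      exact le_trans inf_le_left le_sup_left
  obtain ⟨c, hc⟩ := (isNilpotent_iff_idlcs N).mp hN.1
  have hbot : idlcs N (c + 1) = ⊥ := le_bot_iff.mp (hc ▸ idlcs_le N (Nat.le_succ c))
  have hz₀' : z₀ ∈ U ⊔ LieSubmodule.toSubmodule (idlcs N (c + 1)) := hchain c hz₀D
  obtain ⟨u, hu, w, hw, hsum⟩ := Submodule.mem_sup.mp hz₀'
  have hw0 : w = 0 := by
    rw [hbot] at hw
    simpa using hw
  have : z₀ ∈ U := by
    rw [← hsum, hw0, add_zero]
    exact hu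
  exact hz₀M (Submodule.mem_inf.mp this).1
end

section
/- Let L be a dually atomistic restricted Lie algebra. Then for every subspace S of the nilradical N(L), the restricted subalgebra ⟨S⟩_p generated by S is a restricted ideal of L. -/
open LieAlgebra Module

section AuxSection

namespace DAux

variable {F : Type*} [Field F] {L : Type*} [LieRing L] [LieAlgebra F L]

variable (F) in
/-- `C N k = ⁅N, ⁅N, … , ⁅N, ⊤⁆⁆⁆`. -/
def C (N : LieIdeal F L) : ℕ → LieIdeal F L
  | 0 => ⊤
  | (k+1) => ⁅N, C N k⁆

variable {N : LieIdeal F L} {pm : L → L}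

theorem C_antitone : Antitone (C F N) := by
  apply antitone_nat_of_succ_le
  intro k
  induction k with
  | zero => exact le_top
  | succ k ih => exact LieSubmodule.mono_lie_right N ih

theorem lie_mem_C {x y : L} (hx : x ∈ N) (hy : y ∈ C F N k) : ⁅x, y⁆ ∈ C F N (k+1) :=
  LieSubmodule.lie_mem_lie hx hy

theorem C_lie_mem {k : ℕ} {y : L} (hy : y ∈ C F N k) (x : L) : ⁅x, y⁆ ∈ C F N k :=
  (C F N k).lie_mem hy

theorem exists_C_eq_bot (hN : LieModule.IsNilpotent N N) : ∃ m, 1 ≤ m ∧ C F N m = ⊥ := by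
  obtain ⟨k, hk⟩ := (LieModule.isNilpotent_iff F N N).mp hN
  set X : ℕ → Submodule F L :=
    fun k => Submodule.map (N.incl : ↥N →ₗ[F] L)
      (LieSubmodule.toSubmodule (LieModule.lowerCentralSeries F N N k)) with hX
  have key : ∀ k, ∀ y ∈ C F N (k+1), y ∈ X k := by
    intro k
    induction k with
    | zero =>
      intro y hy
      have hyN : y ∈ N := LieSubmodule.lie_le_left N ⊤ hy
      exact ⟨⟨y, hyN⟩, by simp, rfl⟩
    | succ k ih =>
      intro y hy
      have hspan : (LieSubmodule.toSubmodule (C F N (k+2))) =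
          Submodule.span F { m | ∃ x ∈ N, ∃ n ∈ C F N (k+1), ⁅x, n⁆ = m } := by
        exact LieSubmodule.lieIdeal_oper_eq_linear_span' ..
      have : y ∈ Submodule.span F { m | ∃ x ∈ N, ∃ n ∈ C F N (k+1), ⁅x, n⁆ = m } := by
        rw [← hspan]; exact hy
      refine Submodule.span_le.mpr ?_ this
      rintro _ ⟨a, ha, b, hb, rfl⟩
      obtain ⟨b', hb', rfl⟩ := ih b hb
      refine ⟨⁅(⟨a, ha⟩ : ↥N), b'⁆, ?_, ?_⟩
      · rw [SetLike.mem_coe, LieSubmodule.mem_toSubmodule, LieModule.lowerCentralSeries_succ]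
        exact LieSubmodule.lie_mem_lie (LieSubmodule.mem_top _) hb'
      · rfl
  refine ⟨k + 1, by omega, ?_⟩
  rw [eq_bot_iff]
  intro y hy
  have := key k y hy
  rw [hX] at this
  simp only [hk, LieSubmodule.bot_toSubmodule, Submodule.map_bot, Submodule.mem_bot] at this
  simp [this]


variable (F) in
/-- `Z N i` : elements mapping each `C N j` into `C N (j+i)`. -/
def Z (N : LieIdeal F L) (i : ℕ) : LieSubalgebra F L where
  carrier := {x : L | ∀ j, ∀ y ∈ C F N j, ⁅x, y⁆ ∈ C F N (j + i)}
  add_mem' := fun {a b} ha hb j y hy => by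
    rw [add_lie]; exact add_mem (ha j y hy) (hb j y hy)
  zero_mem' := fun j y hy => by rw [zero_lie]; exact zero_mem _
  smul_mem' := fun c a ha j y hy => by
    rw [smul_lie]; exact Submodule.smul_mem _ c (ha j y hy)
  lie_mem' := fun {a b} ha hb j y hy => by
    rw [lie_lie]
    refine sub_mem ?_ ?_
    · exact C_antitone (by omega) (ha (j+i) _ (hb j y hy))
    · exact C_antitone (by omega) (hb (j+i) _ (ha j y hy))

theorem mem_Z {i : ℕ} {x : L} :
    x ∈ Z F N i ↔ ∀ j, ∀ y ∈ C F N j, ⁅x, y⁆ ∈ C F N (j + i) := Iff.rfl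

theorem N_le_Z_one {x : L} (hx : x ∈ N) : x ∈ Z F N 1 :=
  fun _ _ hy => lie_mem_C hx hy

theorem lie_Z_mem {i : ℕ} (x : L) {z : L} (hz : z ∈ Z F N i) : ⁅x, z⁆ ∈ Z F N i := by
  intro j y hy
  rw [lie_lie]
  exact sub_mem (C_lie_mem (hz j y hy) x) (hz j _ (C_lie_mem hy x))

theorem Z_lie_Z {a b : ℕ} {u v : L} (hu : u ∈ Z F N a) (hv : v ∈ Z F N b) :
    ⁅u, v⁆ ∈ Z F N (a + b) := by
  intro j y hy
  rw [lie_lie]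
  refine sub_mem ?_ ?_
  · exact C_antitone (by omega) (hu (j+b) _ (hv j y hy))
  · exact C_antitone (by omega) (hv (j+a) _ (hu j y hy))

theorem Z_pm {p : ℕ} (hpm : IsPMapping F L p pm) (hp : 1 ≤ p) {i : ℕ} {x : L}
    (hx : x ∈ Z F N i) : pm x ∈ Z F N i := by
  intro j y hy
  rw [hpm.ad_pow]
  have iter : ∀ k, ∀ j, ∀ y ∈ C F N j, ((LieAlgebra.ad F L x) ^ k) y ∈ C F N (j + i * k) := by
    intro k
    induction k with
    | zero => intro j y hy; simpa using hy
    | succ k ih =>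
      intro j y hy
      have h1 : (LieAlgebra.ad F L x) y ∈ C F N (j + i) := hx j y hy
      have h2 := ih (j + i) _ h1
      have e2 : j + i + i * k = j + i * (k + 1) := by ring
      rw [e2] at h2
      simpa [pow_succ, Module.End.mul_apply] using h2
  have h3 := iter p j y hy
  have h4 : j + i ≤ j + i * p :=
    Nat.add_le_add_left (Nat.le_mul_of_pos_right i (by omega)) j
  exact C_antitone h4 h3

theorem Z_central {m : ℕ} (hm : C F N m = ⊥) {z : L} (hz : z ∈ Z F N m) (y : L) :
    ⁅z, y⁆ = 0 := by
  have h0 : y ∈ C F N 0 := LieSubmodule.mem_top y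
  have := hz 0 y h0
  rw [zero_add, hm, LieSubmodule.mem_bot] at this
  exact this

variable (F) in
/-- The sum of a subalgebra and an "ideal-like" subalgebra. -/
def sumSub (M Z' : LieSubalgebra F L) (hZ' : ∀ (x : L), ∀ z ∈ Z', ⁅x, z⁆ ∈ Z') :
    LieSubalgebra F L :=
  { M.toSubmodule ⊔ Z'.toSubmodule with
    lie_mem' := by
      intro a b ha hb
      obtain ⟨m, hm, z, hz, rfl⟩ := Submodule.mem_sup.mp ha
      obtain ⟨m', hm', z', hz', rfl⟩ := Submodule.mem_sup.mp hb
      have e : ⁅m + z, m' + z'⁆ = ⁅m, m'⁆ + (⁅m, z'⁆ + (⁅z, m'⁆ + ⁅z, z'⁆)) := by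
        rw [add_lie, lie_add, lie_add]; abel
      show ⁅m + z, m' + z'⁆ ∈ M.toSubmodule ⊔ Z'.toSubmodule
      rw [e]
      refine add_mem (Submodule.mem_sup_left (M.lie_mem hm hm')) ?_
      refine add_mem (Submodule.mem_sup_right (hZ' m z' hz')) ?_
      refine add_mem (Submodule.mem_sup_right ?_) (Submodule.mem_sup_right (hZ' z z' hz'))
      have : -⁅m', z⁆ ∈ Z' := neg_mem (hZ' m' z hz)
      rwa [lie_skew] at this }

theorem mem_sumSub {M Z' : LieSubalgebra F L} {hZ'} {x : L} :
    x ∈ sumSub F M Z' hZ' ↔ x ∈ M.toSubmodule ⊔ Z'.toSubmodule := Iff.rfl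

theorem sumSub_isPSub {p : ℕ} (hpm : IsPMapping F L p pm) {M Z' : LieSubalgebra F L} {hZ'}
    (hM : IsPSub F pm M) (hZp : ∀ z ∈ Z', pm z ∈ Z') :
    IsPSub F pm (sumSub F M Z' hZ') := by
  intro x hx
  obtain ⟨mm, hm, z, hz, rfl⟩ := Submodule.mem_sup.mp (mem_sumSub.mp hx)
  have hw : pm (mm + z) - pm mm - pm z ∈ LieSubalgebra.lieSpan F L {mm, z} := hpm.add_pm mm z
  have hle : LieSubalgebra.lieSpan F L {mm, z} ≤ sumSub F M Z' hZ' := by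
    rw [LieSubalgebra.lieSpan_le]
    intro w hw
    rcases hw with h | h
    · exact h ▸ Submodule.mem_sup_left hm
    · rw [Set.mem_singleton_iff] at h
      exact h ▸ Submodule.mem_sup_right hz
  have hw' : pm (mm + z) - pm mm - pm z ∈ sumSub F M Z' hZ' := hle hw
  have e : pm (mm + z) = (pm (mm + z) - pm mm - pm z) + pm mm + pm z := by abel
  rw [e]
  exact add_mem (add_mem hw' (Submodule.mem_sup_left (hM mm hm)))
    (Submodule.mem_sup_right (hZp z hz))

theorem mem_sInf' {𝓢 : Set (LieSubalgebra F L)} {x : L} :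
    x ∈ sInf 𝓢 ↔ ∀ T ∈ 𝓢, x ∈ T := by
  rw [← SetLike.mem_coe, LieSubalgebra.coe_sInf]
  simp

theorem pSpan_le {s : Set L} {T : LieSubalgebra F L} (hT : IsPSub F pm T) (hs : s ⊆ T) :
    pSpan F pm s ≤ T :=
  sInf_le ⟨hT, hs⟩

theorem pSpan_isPSub (s : Set L) : IsPSub F pm (pSpan F pm s) := by
  intro x hx
  rw [pSpan, mem_sInf'] at hx ⊢
  intro T hT
  exact hT.1 x (hx T hT)

end DAux

end AuxSection

/-- for a dually atomistic restricted Lie algebra, the restricted subalgebra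
generated by any subspace of the nilradical is a restricted ideal. -/
theorem pSpan_of_subspace_of_nilradical_is_ideal
    (F : Type*) [Field F] (L : Type*) [LieRing L] [LieAlgebra F L]
    [FiniteDimensional F L] (p : ℕ) [Fact p.Prime] [CharP F p]
    (pm : L → L) (hpm : IsPMapping F L p pm)
    (h : DuallyAtomisticP F L pm)
    (N : LieIdeal F L) (hN : IsNilradical F L N)
    (S : Submodule F L) (hS : S ≤ N.toSubmodule) :
    ∀ (x : L) (y : L), y ∈ pSpan F pm (S : Set L) → ⁅x, y⁆ ∈ pSpan F pm (S : Set L) := by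
  intro x y hy
  have hp1 : 1 ≤ p := (Fact.out : p.Prime).one_lt.le
  have hUp : IsPSub F pm (pSpan F pm (S : Set L)) := DAux.pSpan_isPSub _
  obtain ⟨𝓜, h𝓜, hU⟩ := h (pSpan F pm (S : Set L)) hUp
  have hyZ1 : y ∈ DAux.Z F N 1 := by
    refine DAux.pSpan_le (fun z hz => DAux.Z_pm hpm hp1 hz) ?_ hy
    intro s hs
    exact DAux.N_le_Z_one (hS hs)
  rw [hU] at hy ⊢
  rw [DAux.mem_sInf'] at hy ⊢
  intro M hM
  obtain ⟨hMp, hMne, hMmax⟩ := h𝓜 M hM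
  have hyM : y ∈ M := hy M hM
  obtain ⟨m, hm1, hmbot⟩ := DAux.exists_C_eq_bot hN.1
  -- if `Z i` is not contained in `M`, then `M + Z i = L`
  have hsum : ∀ i, ¬ (DAux.Z F N i ≤ M) → ∀ w : L, ∃ m' ∈ M, ∃ z ∈ DAux.Z F N i, w = m' + z := by
    intro i hi w
    set T := DAux.sumSub F M (DAux.Z F N i) (fun a z hz => DAux.lie_Z_mem a hz) with hT
    have hTp : IsPSub F pm T :=
      DAux.sumSub_isPSub hpm hMp (fun z hz => DAux.Z_pm hpm hp1 hz)
    have hMT : M ≤ T := fun a ha => Submodule.mem_sup_left ha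
    have hne : M ≠ T := by
      intro hMeq
      apply hi
      intro z hz
      have : z ∈ T := Submodule.mem_sup_right hz
      rw [← hMeq] at this
      exact this
    have hTtop : T = ⊤ := hMmax T hTp (lt_of_le_of_ne hMT hne)
    have hwT : w ∈ T := by rw [hTtop]; exact LieSubalgebra.mem_top w
    obtain ⟨m', hm', z, hz, hzw⟩ := Submodule.mem_sup.mp (DAux.mem_sumSub.mp hwT)
    exact ⟨m', hm', z, hz, hzw.symm⟩
  by_cases hZ1 : DAux.Z F N 1 ≤ M
  · exact hZ1 (DAux.lie_Z_mem x hyZ1)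
  · have claim : ∀ d i, 1 ≤ i → i + d = m → ¬ (DAux.Z F N i ≤ M) → ⁅x, y⁆ ∈ M := by
      intro d
      induction d with
      | zero =>
        intro i hi him hiM
        have him' : i = m := by omega
        subst him'
        obtain ⟨m', hm', z, hz, rfl⟩ := hsum i hiM x
        have h0 : ⁅z, y⁆ = 0 := DAux.Z_central hmbot hz y
        rw [add_lie, h0, add_zero]
        exact M.lie_mem hm' hyM
      | succ d ih =>
        intro i hi him hiM
        by_cases hZi1 : DAux.Z F N (i+1) ≤ M
        · obtain ⟨m', hm', z, hz, rfl⟩ := hsum i hiM x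
          have h1 : ⁅z, y⁆ ∈ M := hZi1 (DAux.Z_lie_Z hz hyZ1)
          rw [add_lie]
          exact M.add_mem (M.lie_mem hm' hyM) h1
        · exact ih (i+1) (by omega) (by omega) hZi1
    exact claim (m - 1) 1 le_rfl (by omega) hZ1
end

section
/- Let L be a perfect restricted Lie algebra over a field of characteristic p > 0 such that every (ordinary) subalgebra of L is an intersection of maximal subalgebras. Then every subalgebra of L is a restricted subalgebra (closed under the p-th power map). -/
open LieAlgebra Module

private lemma adPowMemAux (F : Type*) [Field F] {L : Type*} [LieRing L] [LieAlgebra F L]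
    (M : LieSubalgebra F L) {x : L} (hx : x ∈ M) (n : ℕ) {y : L} (hy : y ∈ M) :
    ((LieAlgebra.ad F L x) ^ n) y ∈ M := by
  induction n with
  | zero => simpa using hy
  | succ n ih =>
    rw [pow_succ', Module.End.mul_apply]
    exact M.lie_mem hx ih

/-- in a perfect restricted Lie algebra in which every ordinary subalgebra is
an intersection of maximal subalgebras, every subalgebra is restricted. -/
theorem subalgebras_restricted_of_perfect_restricted_duallyAtomistic
    (F : Type*) [Field F] (L : Type*) [LieRing L] [LieAlgebra F L]
    [FiniteDimensional F L] (p : ℕ) [Fact p.Prime] [CharP F p]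
    (pm : L → L) (hpm : IsPMapping F L p pm)
    (hperf : LieAlgebra.derivedSeries F L 1 = ⊤)
    (h : DuallyAtomistic F L) :
    ∀ S : LieSubalgebra F L, IsPSub F pm S := by
  have key : ∀ M : LieSubalgebra F L, M ≠ ⊤ → (∀ S' : LieSubalgebra F L, M < S' → S' = ⊤) →
      ∀ x ∈ M, pm x ∈ M := by
    intro M hMne hMmax x hx
    by_contra hpx
    set z := pm x with hz
    have hzM : ∀ y ∈ M, ⁅z, y⁆ ∈ M := fun y hy => by
      rw [hz, hpm.ad_pow x y]; exact adPowMemAux F M hx p hy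
    set N' : Submodule F L := M.toSubmodule ⊔ Submodule.span F {z} with hN'
    have memN' : ∀ a, a ∈ N' → ∃ m ∈ M, ∃ c : F, a = m + c • z := by
      intro a ha
      rcases Submodule.mem_sup.mp ha with ⟨m, hm, w, hw, rfl⟩
      rcases Submodule.mem_span_singleton.mp hw with ⟨c, rfl⟩
      exact ⟨m, hm, c, rfl⟩
    have hbr : ∀ a b : L, a ∈ N' → b ∈ N' → ⁅a, b⁆ ∈ M := by
      intro a b ha hb
      obtain ⟨m1, hm1, c1, rfl⟩ := memN' a ha
      obtain ⟨m2, hm2, c2, rfl⟩ := memN' b hb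
      rw [lie_add, add_lie, add_lie]
      refine M.add_mem (M.add_mem ?_ ?_) (M.add_mem ?_ ?_)
      · exact M.lie_mem hm1 hm2
      · rw [smul_lie]; exact M.smul_mem c1 (hzM m2 hm2)
      · rw [lie_smul, ← lie_skew]
        exact M.smul_mem c2 (M.neg_mem (hzM m1 hm1))
      · rw [smul_lie, lie_smul, lie_self, smul_zero, smul_zero]
        exact M.zero_mem
    have hMleN' : M.toSubmodule ≤ N' := le_sup_left
    set N : LieSubalgebra F L :=
      { N' with lie_mem' := fun {a b} ha hb => hMleN' (hbr a b ha hb) } with hN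
    have hzN : z ∈ N := Submodule.mem_sup_right (Submodule.mem_span_singleton_self z)
    have hMltN : M < N := by
      refine lt_of_le_of_ne (fun y hy => hMleN' hy) ?_
      intro hEq
      exact hpx (hEq ▸ hzN)
    have hNtop : N = ⊤ := hMmax N hMltN
    have htop : ∀ a : L, a ∈ N' := by
      intro a
      have : a ∈ N := by rw [hNtop]; exact LieSubalgebra.mem_top a
      exact this
    have e : LieAlgebra.derivedSeries F L 1 = ⁅(⊤ : LieIdeal F L), (⊤ : LieIdeal F L)⁆ := by
      simp [LieAlgebra.derivedSeries_def, LieAlgebra.derivedSeriesOfIdeal_succ,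
        LieAlgebra.derivedSeriesOfIdeal_zero]
    have etop : (⁅(⊤ : LieIdeal F L), (⊤ : LieIdeal F L)⁆ : LieIdeal F L) = ⊤ := by
      rw [← e, hperf]
    have h2 : ∀ m : L, m ∈ (⁅(⊤ : LieIdeal F L), (⊤ : LieIdeal F L)⁆ : LieSubmodule F L L) →
        m ∈ M := by
      intro m hm
      have hm' : m ∈ Submodule.span F
          {m : L | ∃ x ∈ (⊤ : LieIdeal F L), ∃ n ∈ (⊤ : LieIdeal F L), ⁅x, n⁆ = m} := by
        rw [← LieSubmodule.lieIdeal_oper_eq_linear_span']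
        exact hm
      refine Submodule.span_induction ?_ M.zero_mem
        (fun _ _ _ _ => M.add_mem) (fun c _ _ => M.smul_mem c) hm'
      rintro m ⟨u, -, v, -, rfl⟩
      exact hbr u v (htop u) (htop v)
    apply hMne
    ext a
    simp only [LieSubalgebra.mem_top, iff_true]
    refine h2 a ?_
    rw [etop]
    exact LieSubmodule.mem_top a
  intro S x hx
  obtain ⟨𝓜, h𝓜, hS⟩ := h S
  have : pm x ∈ (↑(sInf 𝓜) : Set L) := by
    rw [LieSubalgebra.coe_sInf]
    simp only [Set.mem_iInter]
    intro M hM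
    exact key M (h𝓜 M hM).1 (h𝓜 M hM).2 x ((hS ▸ sInf_le hM) hx)
  rw [hS]
  exact this
end

section
/- If S is a restricted subalgebra of a restricted Lie algebra L, then the core S_L (the largest ideal of L contained in S) is a restricted ideal of L. -/
open LieAlgebra Module

/-- the core (largest ideal of `L` contained in `S`) of a restricted
subalgebra `S` is a restricted ideal. -/
theorem core_of_restricted_subalgebra_is_restricted
    (F : Type*) [Field F] (L : Type*) [LieRing L] [LieAlgebra F L]
    [FiniteDimensional F L] (p : ℕ) [Fact p.Prime] [CharP F p]
    (pm : L → L) (hpm : IsPMapping F L p pm)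
    (S : LieSubalgebra F L) (hS : IsPSub F pm S)
    (I : LieIdeal F L) (hIS : ∀ x ∈ I, x ∈ S)
    (hImax : ∀ J : LieIdeal F L, (∀ x ∈ J, x ∈ S) → J ≤ I) :
    ∀ x ∈ I, pm x ∈ I := by
  intro x hx
  have hleft : ∀ (x' : L), x' ∈ I → ∀ y : L, ⁅x', y⁆ ∈ I := by
    intro x' hx' y
    rw [← lie_skew]
    exact I.neg_mem (I.lie_mem hx')
  have had : ∀ (n : ℕ) (y : L), ((LieAlgebra.ad F L x) ^ (n + 1)) y ∈ I := by
    intro n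
    induction n with
    | zero => intro y; simpa using hleft x hx y
    | succ n ih =>
      intro y
      have : ((LieAlgebra.ad F L x) ^ (n + 1 + 1)) y
          = ⁅x, ((LieAlgebra.ad F L x) ^ (n + 1)) y⁆ := by
        rw [pow_succ']; rfl
      rw [this]
      exact hleft x hx _
  obtain ⟨q, hq⟩ : ∃ q, p = q + 1 := ⟨p - 1, (Nat.succ_pred_eq_of_pos (Fact.out : p.Prime).pos).symm⟩
  let Jsub : Submodule F L := I.toSubmodule ⊔ Submodule.span F {pm x}
  have hmem : ∀ m ∈ Jsub, ∃ (i : L) (c : F), i ∈ I ∧ m = i + c • pm x := by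
    intro m hm
    rw [Submodule.mem_sup] at hm
    obtain ⟨i, hi, z, hz, rfl⟩ := hm
    rw [Submodule.mem_span_singleton] at hz
    obtain ⟨c, rfl⟩ := hz
    exact ⟨i, c, hi, rfl⟩
  have hlie : ∀ {y m : L}, m ∈ Jsub → ⁅y, m⁆ ∈ Jsub := by
    intro y m hm
    obtain ⟨i, c, hi, rfl⟩ := hmem m hm
    have h1 : ⁅y, i⁆ ∈ Jsub := Submodule.mem_sup_left (I.lie_mem hi)
    have h2 : ⁅y, c • pm x⁆ = (-c) • ((LieAlgebra.ad F L x) ^ p) y := by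
      rw [← hpm.ad_pow, lie_smul, ← lie_skew, neg_smul, smul_neg]
    have h3 : ⁅y, c • pm x⁆ ∈ Jsub := by
      rw [h2]
      refine Submodule.mem_sup_left (Submodule.smul_mem _ _ ?_)
      rw [hq]; exact had q y
    simpa [lie_add] using Jsub.add_mem h1 h3
  let J : LieIdeal F L := { Jsub with lie_mem := fun {y m} hm => hlie hm }
  have hJS : ∀ z ∈ J, z ∈ S := by
    intro z hz
    obtain ⟨i, c, hi, rfl⟩ := hmem z hz
    exact S.add_mem (hIS i hi) (S.smul_mem c (hS x (hIS x hx)))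
  have hpmJ : pm x ∈ J :=
    Submodule.mem_sup_right (Submodule.mem_span_singleton_self _)
  exact hImax J hJS hpmJ
end

section
/- Let L be a restricted Lie algebra over a perfect field of characteristic p > 0, and let L^[p] denote the restricted subalgebra generated by all elements x^[p] with x ∈ L. Then L^[p] is a restricted quasi-ideal of L if and only if L^[p] is an ideal of L. -/
open LieAlgebra Module

set_option linter.unusedSectionVars false

section AuxProof

variable {F : Type*} [Field F] {L : Type*} [LieRing L] [LieAlgebra F L]
variable {p : ℕ} [Fact p.Prime] [CharP F p] {pm : L → L}

lemma aux_pm_zero (hpm : IsPMapping F L p pm) : pm (0 : L) = 0 := by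
  have h := hpm.smul_pow 0 0
  rw [zero_smul, zero_pow (Nat.Prime.ne_zero Fact.out), zero_smul] at h
  exact h

lemma aux_ad_iterate (hpm : IsPMapping F L p pm) (t : L) :
    ∀ (i : ℕ) (y : L), ⁅pm^[i] t, y⁆ = ((LieAlgebra.ad F L t) ^ (p ^ i)) y := by
  intro i
  induction i with
  | zero => intro y; simp [LieAlgebra.ad_apply]
  | succ i ih =>
    intro y
    rw [Function.iterate_succ_apply', hpm.ad_pow]
    have had : LieAlgebra.ad F L (pm^[i] t) = (LieAlgebra.ad F L t) ^ (p ^ i) :=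
      LinearMap.ext fun z => by rw [LieAlgebra.ad_apply]; exact ih z
    rw [had, ← pow_mul, ← pow_succ]

lemma aux_lie_self_iterate (hpm : IsPMapping F L p pm) (t : L) (j : ℕ) :
    ⁅t, pm^[j] t⁆ = 0 := by
  rw [← neg_eq_zero, ← lie_skew, aux_ad_iterate hpm]
  obtain ⟨n, hn⟩ : ∃ n, p ^ j = n + 1 :=
    ⟨p ^ j - 1, (Nat.succ_pred_eq_of_pos (pow_pos (Nat.Prime.pos Fact.out) j)).symm⟩
  rw [hn, pow_succ, Module.End.mul_apply, LieAlgebra.ad_apply, lie_self, map_zero, neg_neg]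

lemma aux_lie_iterate_iterate (hpm : IsPMapping F L p pm) (t : L) (i j : ℕ) :
    ⁅pm^[i] t, pm^[j] t⁆ = 0 := by
  rw [aux_ad_iterate hpm]
  obtain ⟨n, hn⟩ : ∃ n, p ^ i = n + 1 :=
    ⟨p ^ i - 1, (Nat.succ_pred_eq_of_pos (pow_pos (Nat.Prime.pos Fact.out) i)).symm⟩
  rw [hn, pow_succ, Module.End.mul_apply, LieAlgebra.ad_apply, aux_lie_self_iterate hpm,
    map_zero]

lemma aux_span_lie_mem (hpm : IsPMapping F L p pm) (x : L) {y z : L}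
    (hy : y ∈ Submodule.span F (Set.range fun i => pm^[i] x))
    (hz : z ∈ Submodule.span F (Set.range fun i => pm^[i] x)) :
    ⁅y, z⁆ ∈ Submodule.span F (Set.range fun i => pm^[i] x) := by
  refine Submodule.span_induction₂
    (p := fun a b _ _ => ⁅a, b⁆ ∈ Submodule.span F (Set.range fun i => pm^[i] x))
    ?_ ?_ ?_ ?_ ?_ ?_ ?_ hy hz
  · rintro _ _ ⟨i, rfl⟩ ⟨j, rfl⟩
    rw [aux_lie_iterate_iterate hpm]
    exact Submodule.zero_mem _
  · intro y _; rw [zero_lie]; exact Submodule.zero_mem _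
  · intro y _; rw [lie_zero]; exact Submodule.zero_mem _
  · intro a b c _ _ _ h1 h2; rw [add_lie]; exact Submodule.add_mem _ h1 h2
  · intro a b c _ _ _ h1 h2; rw [lie_add]; exact Submodule.add_mem _ h1 h2
  · intro r a b _ _ h; rw [smul_lie]; exact Submodule.smul_mem _ _ h
  · intro r a b _ _ h; rw [lie_smul]; exact Submodule.smul_mem _ _ h

/-- The (abelian) restricted subalgebra generated by a single element. -/
def pmIterSpan (hpm : IsPMapping F L p pm) (x : L) : LieSubalgebra F L :=
  { Submodule.span F (Set.range fun i => pm^[i] x) with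
    lie_mem' := fun hy hz => aux_span_lie_mem hpm x hy hz }

lemma mem_pmIterSpan (hpm : IsPMapping F L p pm) (x : L) (i : ℕ) :
    pm^[i] x ∈ pmIterSpan hpm x :=
  Submodule.subset_span ⟨i, rfl⟩

lemma self_mem_pmIterSpan (hpm : IsPMapping F L p pm) (x : L) :
    x ∈ pmIterSpan hpm x := mem_pmIterSpan hpm x 0

/-- A subalgebra whose generators have their `p`-th powers in it is restricted. -/
lemma aux_isPSub_of_span (hpm : IsPMapping F L p pm) (A : LieSubalgebra F L)
    (T : Set L) (hspan : A.toSubmodule ≤ Submodule.span F T)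
    (hT : T ⊆ A) (hpmT : ∀ t ∈ T, pm t ∈ A) : IsPSub F pm A := by
  intro z hz
  have key : ∀ w ∈ Submodule.span F T, w ∈ A ∧ pm w ∈ A := by
    intro w hw
    refine Submodule.span_induction ?_ ?_ ?_ ?_ hw
    · intro t ht; exact ⟨hT ht, hpmT t ht⟩
    · exact ⟨A.zero_mem, by rw [aux_pm_zero hpm]; exact A.zero_mem⟩
    · rintro a b _ _ ⟨haA, hpa⟩ ⟨hbA, hpb⟩
      refine ⟨A.add_mem haA hbA, ?_⟩
      have h := hpm.add_pm a b
      have hle : LieSubalgebra.lieSpan F L {a, b} ≤ A := by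
        rw [LieSubalgebra.lieSpan_le]
        rintro u (rfl | rfl)
        · exact haA
        · exact hbA
      have : pm (a + b) = (pm (a + b) - pm a - pm b) + pm a + pm b := by abel
      rw [this]
      exact A.add_mem (A.add_mem (hle h) hpa) hpb
    · rintro c a _ ⟨haA, hpa⟩
      refine ⟨A.smul_mem c haA, ?_⟩
      rw [hpm.smul_pow]
      exact A.smul_mem _ hpa
  exact (key z (hspan hz)).2

lemma pmIterSpan_isPSub (hpm : IsPMapping F L p pm) (x : L) :
    IsPSub F pm (pmIterSpan hpm x) := by
  refine aux_isPSub_of_span hpm _ (Set.range fun i => pm^[i] x) le_rfl ?_ ?_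
  · rintro _ ⟨i, rfl⟩; exact mem_pmIterSpan hpm x i
  · rintro _ ⟨i, rfl⟩
    have h : pm (pm^[i] x) = pm^[i + 1] x := (Function.iterate_succ_apply' pm i x).symm
    show pm (pm^[i] x) ∈ _
    rw [h]
    exact mem_pmIterSpan hpm x (i + 1)

lemma subset_pSpan {s : Set L} : s ⊆ ↑(pSpan F pm s) := by
  intro z hz
  have h : LieSubalgebra.lieSpan F L s ≤ pSpan F pm s := by
    apply le_sInf
    rintro T ⟨-, hT⟩
    rw [LieSubalgebra.lieSpan_le]
    exact hT
  exact h (LieSubalgebra.subset_lieSpan hz)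

lemma pSpan_isPSub {s : Set L} : IsPSub F pm (pSpan F pm s) := by
  intro z hz
  have hz' : ∀ T ∈ {S : LieSubalgebra F L | IsPSub F pm S ∧ s ⊆ S}, pm z ∈ T := by
    rintro T ⟨hTp, hTs⟩
    have hzT : z ∈ T := by
      have := sInf_le (show T ∈ {S : LieSubalgebra F L | IsPSub F pm S ∧ s ⊆ S} from ⟨hTp, hTs⟩)
      exact this hz
    exact hTp z hzT
  show pm z ∈ sInf _
  rw [← LieSubalgebra.mem_toSubmodule, LieSubalgebra.sInf_toSubmodule]
  refine Submodule.mem_sInf.2 ?_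
  rintro q ⟨T, hT, rfl⟩
  exact hz' T hT

lemma aux_lie_sum {ι : Type*} (s : Finset ι) (f : ι → L) (x : L) :
    ⁅x, ∑ i ∈ s, f i⁆ = ∑ i ∈ s, ⁅x, f i⁆ := by
  induction s using Finset.cons_induction with
  | empty => simp
  | cons i s hi ih => rw [Finset.sum_cons, Finset.sum_cons, lie_add, ih]

end AuxProof


/-- over a perfect field, `L^[p]` is a restricted quasi-ideal of `L` iff it is
an ideal of `L`. -/
theorem pPower_subalgebra_quasiIdeal_iff_ideal
    (F : Type*) [Field F] [PerfectField F] (L : Type*) [LieRing L] [LieAlgebra F L]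
    [FiniteDimensional F L] (p : ℕ) [Fact p.Prime] [CharP F p]
    (pm : L → L) (hpm : IsPMapping F L p pm) :
    IsPQuasiIdeal F pm (pSpan F pm (Set.range pm)) ↔
      ∀ (x : L) (y : L), y ∈ pSpan F pm (Set.range pm) →
        ⁅x, y⁆ ∈ pSpan F pm (Set.range pm) := by
  classical
  set S := pSpan F pm (Set.range pm) with hSdef
  have hSp : IsPSub F pm S := pSpan_isPSub
  have hrange : ∀ t : L, pm t ∈ S := fun t => subset_pSpan ⟨t, rfl⟩
  constructor
  · -- quasi-ideal → ideal
    intro hq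
    by_cases htop : ∀ z : L, z ∈ S
    · intro x y hy; exact S.lie_mem (htop x) hy
    push_neg at htop
    obtain ⟨x₀, hx₀⟩ := htop
    -- Step 1
    have step1 : ∀ x : L, x ∉ S → ∀ s ∈ S, ∃ c : F, ⁅x, s⁆ - c • x ∈ S := by
      intro x hx s hs
      have hmem := hq.2 (pmIterSpan hpm x) (pmIterSpan_isPSub hpm x) s hs x
        (self_mem_pmIterSpan hpm x)
      have hle : (pmIterSpan hpm x).toSubmodule ≤ S.toSubmodule ⊔ Submodule.span F {x} := by
        show Submodule.span F (Set.range fun i => pm^[i] x) ≤ _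
        refine Submodule.span_le.2 ?_
        rintro _ ⟨i, rfl⟩
        cases i with
        | zero =>
          exact Submodule.mem_sup_right (Submodule.mem_span_singleton_self x)
        | succ i =>
          refine Submodule.mem_sup_left ?_
          show pm^[i + 1] x ∈ S.toSubmodule
          rw [Function.iterate_succ_apply']
          exact hrange _
      have hmem2 : ⁅s, x⁆ ∈ S.toSubmodule ⊔ Submodule.span F {x} :=
        (sup_le le_sup_left hle) hmem
      obtain ⟨σ, hσ, w, hw, hsum⟩ := Submodule.mem_sup.1 hmem2
      obtain ⟨c, rfl⟩ := Submodule.mem_span_singleton.1 hw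
      refine ⟨-c, ?_⟩
      have h1 : ⁅x, s⁆ = -⁅s, x⁆ := by rw [← lie_skew]
      have h2 : ⁅x, s⁆ - (-c) • x = -σ := by
        rw [h1, ← hsum, neg_smul]; abel
      rw [h2]
      exact neg_mem ((LieSubalgebra.mem_toSubmodule (L' := S)).1 hσ)
    -- uniqueness of the eigenvalue
    have uniq : ∀ x : L, x ∉ S → ∀ c : F, c • x ∈ S → c = 0 := by
      intro x hx c hc
      by_contra hc0
      exact hx (by simpa [smul_smul, inv_mul_cancel₀ hc0] using S.smul_mem c⁻¹ hc)
    -- the eigenvalue function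
    have hchoice : ∀ s : L, ∃ c : F, s ∈ S → ⁅x₀, s⁆ - c • x₀ ∈ S := by
      intro s
      by_cases hs : s ∈ S
      · obtain ⟨c, hc⟩ := step1 x₀ hx₀ s hs
        exact ⟨c, fun _ => hc⟩
      · exact ⟨0, fun h => absurd h hs⟩
    choose μ hμ using hchoice
    have hval : ∀ s ∈ S, ∀ c : F, ⁅x₀, s⁆ - c • x₀ ∈ S → c = μ s := by
      intro s hs c hc
      have h2 : (μ s - c) • x₀ ∈ S := by
        have e : (⁅x₀, s⁆ - c • x₀) - (⁅x₀, s⁆ - μ s • x₀) = (μ s - c) • x₀ := by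
          rw [sub_smul]; abel
        rw [← e]
        exact sub_mem hc (hμ s hs)
      have h3 := uniq x₀ hx₀ _ h2
      have h4 := sub_eq_zero.1 h3
      exact h4.symm
    -- constancy of the eigenvalue
    have hμx : ∀ x : L, x ∉ S → ∀ s ∈ S, ⁅x, s⁆ - μ s • x ∈ S := by
      intro x hx s hs
      by_cases hdep : ∃ α β : F, (α ≠ 0 ∨ β ≠ 0) ∧ α • x₀ + β • x ∈ S
      · obtain ⟨α, β, hne, hσmem⟩ := hdep
        have hβ : β ≠ 0 := by
          rintro rfl
          rw [zero_smul, add_zero] at hσmem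
          have hα0 := uniq x₀ hx₀ α hσmem
          rcases hne with h | h
          · exact h hα0
          · exact h rfl
        have hα : α ≠ 0 := by
          rintro rfl
          rw [zero_smul, zero_add] at hσmem
          exact hβ (uniq x hx β hσmem)
        have hx_eq : x = β⁻¹ • (α • x₀ + β • x) - (β⁻¹ * α) • x₀ := by
          rw [smul_add, smul_smul, smul_smul, inv_mul_cancel₀ hβ, one_smul]
          abel
        have key : ⁅x, s⁆ - μ s • x =
            β⁻¹ • ⁅α • x₀ + β • x, s⁆ - (μ s * β⁻¹) • (α • x₀ + β • x)
              - (β⁻¹ * α) • (⁅x₀, s⁆ - μ s • x₀) := by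
          conv_lhs => rw [hx_eq]
          rw [sub_lie, smul_lie, smul_lie]
          module
        rw [key]
        refine sub_mem (sub_mem (S.smul_mem _ (S.lie_mem hσmem hs))
          (S.smul_mem _ hσmem)) (S.smul_mem _ (hμ s hs))
      · push_neg at hdep
        have hx0x : x₀ + x ∉ S := by
          intro h
          exact hdep 1 1 (Or.inl one_ne_zero) (by simpa using h)
        obtain ⟨c, hc⟩ := step1 x hx s hs
        obtain ⟨d, hd⟩ := step1 (x₀ + x) hx0x s hs
        have hcomb : (μ s - d) • x₀ + (c - d) • x ∈ S := by
          have e : (⁅x₀ + x, s⁆ - d • (x₀ + x)) - (⁅x₀, s⁆ - μ s • x₀) - (⁅x, s⁆ - c • x)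
              = (μ s - d) • x₀ + (c - d) • x := by
            rw [add_lie, sub_smul, sub_smul, smul_add]; abel
          rw [← e]
          exact sub_mem (sub_mem hd (hμ s hs)) hc
        by_cases hzero : μ s - d = 0 ∧ c - d = 0
        · have : c = μ s := by
            have h1 := sub_eq_zero.1 hzero.1
            have h2 := sub_eq_zero.1 hzero.2
            rw [h1, h2]
          rw [← this]
          exact hc
        · exfalso
          apply hdep (μ s - d) (c - d) _ hcomb
          by_contra hcon
          push_neg at hcon
          exact hzero ⟨hcon.1, hcon.2⟩
    -- p-th powers of eigenvalues
    have hμp : ∀ s ∈ S, μ (pm s) = μ s ^ p := by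
      intro s hs
      have hpow : ∀ k : ℕ, ((LieAlgebra.ad F L s) ^ k) x₀ - ((-μ s) ^ k) • x₀ ∈ S := by
        intro k
        induction k with
        | zero =>
          simp only [pow_zero, Module.End.one_apply, one_smul, sub_self]
          exact zero_mem _
        | succ k ih =>
          have e1 : ((LieAlgebra.ad F L s) ^ (k + 1)) x₀
              = (LieAlgebra.ad F L s) (((LieAlgebra.ad F L s) ^ k) x₀) := by
            rw [pow_succ', Module.End.mul_apply]
          have e2 : (LieAlgebra.ad F L s) (((LieAlgebra.ad F L s) ^ k) x₀)
              = ⁅s, ((LieAlgebra.ad F L s) ^ k) x₀⁆ := rfl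
          have hlie : ⁅s, ((LieAlgebra.ad F L s) ^ k) x₀ - ((-μ s) ^ k) • x₀⁆ ∈ S :=
            S.lie_mem hs ih
          have e3 : ((LieAlgebra.ad F L s) ^ (k + 1)) x₀ - ((-μ s) ^ (k + 1)) • x₀
              = ⁅s, ((LieAlgebra.ad F L s) ^ k) x₀ - ((-μ s) ^ k) • x₀⁆
                - ((-μ s) ^ k) • (⁅x₀, s⁆ - μ s • x₀) := by
            rw [e1, e2, lie_sub, lie_smul]
            have e4 : ⁅s, x₀⁆ = -⁅x₀, s⁆ := by rw [lie_skew]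
            rw [e4, pow_succ]
            module
          rw [e3]
          exact sub_mem hlie (S.smul_mem _ (hμ s hs))
      have h1 : ⁅x₀, pm s⁆ - (-((-μ s) ^ p)) • x₀ ∈ S := by
        have e : ⁅x₀, pm s⁆ = -⁅pm s, x₀⁆ := by rw [lie_skew]
        have e2 : ⁅pm s, x₀⁆ = ((LieAlgebra.ad F L s) ^ p) x₀ := hpm.ad_pow s x₀
        have e3 : ⁅x₀, pm s⁆ - (-((-μ s) ^ p)) • x₀
            = -(((LieAlgebra.ad F L s) ^ p) x₀ - ((-μ s) ^ p) • x₀) := by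
          rw [e, e2]; module
        rw [e3]
        exact neg_mem (hpow p)
      have h2 := hval (pm s) (hSp s hs) _ h1
      rw [← h2]
      have h3 : (-μ s) ^ p = -(μ s ^ p) := by
        rw [neg_pow, neg_one_pow_char F, neg_one_mul]
      rw [h3, neg_neg]
    have hμiter : ∀ s ∈ S, ∀ i : ℕ, μ (pm^[i] s) = μ s ^ p ^ i := by
      intro s hs i
      induction i with
      | zero => simp
      | succ i ih =>
        have hmem : pm^[i] s ∈ S := by
          clear ih
          induction i with
          | zero => exact hs
          | succ i ih2 => rw [Function.iterate_succ_apply']; exact hSp _ ih2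
        rw [Function.iterate_succ_apply', hμp _ hmem, ih, ← pow_mul, ← pow_succ]
    -- membership of iterates
    have hiterS : ∀ s ∈ S, ∀ i : ℕ, pm^[i] s ∈ S := by
      intro s hs i
      induction i with
      | zero => exact hs
      | succ i ih => rw [Function.iterate_succ_apply']; exact hSp _ ih
    -- the key claim : μ vanishes on S
    have hμzero : ∀ s ∈ S, μ s = 0 := by
      by_contra hcon
      push_neg at hcon
      obtain ⟨s₁, hs₁, hμs₁⟩ := hcon
      -- the iterates of s₁ are linearly dependent
      have hnli : ¬ LinearIndependent F (fun j : ℕ => pm^[j] s₁) := by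
        intro hli
        have h0 := hli.finrank_eq_zero_of_infinite
        have hx₀ne : x₀ ≠ 0 := fun h => hx₀ (h ▸ zero_mem S)
        have : Nontrivial L := ⟨x₀, 0, hx₀ne⟩
        exact (Module.finrank_pos (R := F) (M := L)).ne' h0
      rw [not_linearIndependent_iff] at hnli
      obtain ⟨t, g, hsum, i₀, hi₀, hgi₀⟩ := hnli
      -- take the minimal index with nonzero coefficient
      set T : Finset ℕ := t.filter (fun i => g i ≠ 0) with hT
      have hTne : T.Nonempty := ⟨i₀, Finset.mem_filter.2 ⟨hi₀, hgi₀⟩⟩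
      set m : ℕ := T.min' hTne with hm
      have hmT : m ∈ T := T.min'_mem hTne
      have hgm : g m ≠ 0 := (Finset.mem_filter.1 hmT).2
      have hmt : m ∈ t := (Finset.mem_filter.1 hmT).1
      -- a = pm^[m] s₁
      set a : L := pm^[m] s₁ with ha
      have haS : a ∈ S := hiterS s₁ hs₁ m
      have hμa : μ a ≠ 0 := by
        rw [ha, hμiter s₁ hs₁ m]
        exact pow_ne_zero _ hμs₁
      -- rewrite the dependence: a = ∑ over T.erase m of coefficients times iterates of a
      have hrel : a = ∑ i ∈ T.erase m, (-(g m)⁻¹ * g i) • pm^[i - m] a := by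
        have hsum' : ∑ i ∈ T, g i • pm^[i] s₁ = 0 := by
          rw [← hsum]
          refine Finset.sum_subset (Finset.filter_subset _ _) ?_
          intro i hit hiT
          have : g i = 0 := by
            by_contra h
            exact hiT (Finset.mem_filter.2 ⟨hit, h⟩)
          rw [this, zero_smul]
        have hsplit : g m • pm^[m] s₁ + ∑ i ∈ T.erase m, g i • pm^[i] s₁ = 0 := by
          rw [Finset.add_sum_erase T (fun i => g i • pm^[i] s₁) hmT]
          exact hsum'
        have step : ∀ i ∈ T.erase m, g i • pm^[i] s₁ = g i • pm^[i - m] a := by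
          intro i hi
          have him : m < i := by
            rcases Finset.mem_erase.1 hi with ⟨hne, hiT⟩
            exact lt_of_le_of_ne (T.min'_le i hiT) (Ne.symm hne)
          have : pm^[i - m] a = pm^[i] s₁ := by
            rw [ha, ← Function.iterate_add_apply]
            congr 1
            omega
          rw [this]
        rw [Finset.sum_congr rfl step] at hsplit
        have : g m • a = -∑ i ∈ T.erase m, g i • pm^[i - m] a := by
          rw [ha, eq_neg_iff_add_eq_zero]
          exact hsplit
        calc a = (g m)⁻¹ • (g m • a) := by
                rw [smul_smul, inv_mul_cancel₀ hgm, one_smul]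
          _ = (g m)⁻¹ • (-∑ i ∈ T.erase m, g i • pm^[i - m] a) := by rw [this]
          _ = ∑ i ∈ T.erase m, (-(g m)⁻¹ * g i) • pm^[i - m] a := by
                rw [smul_neg, Finset.smul_sum]
                rw [← Finset.sum_neg_distrib]
                refine Finset.sum_congr rfl fun i _ => ?_
                rw [smul_smul, neg_mul, neg_smul]
      -- indices in `T.erase m` are larger than `m`
      have hgt : ∀ i ∈ T.erase m, m < i := by
        intro i hi
        rcases Finset.mem_erase.1 hi with ⟨hne, hiT⟩
        exact lt_of_le_of_ne (T.min'_le i hiT) (Ne.symm hne)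
      set E : Finset ℕ := T.erase m with hE
      set c : ℕ → F := fun i => -(g m)⁻¹ * g i with hc
      -- the separable p-polynomial annihilating ad a
      set lam : F := -μ a with hlam
      have hlamne : lam ≠ 0 := neg_ne_zero.2 hμa
      set f : Polynomial F :=
        (∑ i ∈ E, Polynomial.C (c i) * Polynomial.X ^ (p ^ (i - m))) - Polynomial.X with hf
      have hadpm : ∀ k : ℕ, LieAlgebra.ad F L (pm^[k] a) = (LieAlgebra.ad F L a) ^ (p ^ k) :=
        fun k => LinearMap.ext fun z => by
          rw [LieAlgebra.ad_apply]; exact aux_ad_iterate hpm a k z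
      have hsum0 : (∑ i ∈ E, c i • pm^[i - m] a) - a = 0 := by
        rw [← hrel]; exact sub_self a
      have heval0 : Polynomial.aeval (LieAlgebra.ad F L a) f = 0 := by
        rw [hf, map_sub, map_sum, Polynomial.aeval_X]
        have h2 : ∀ i ∈ E, Polynomial.aeval (LieAlgebra.ad F L a)
            (Polynomial.C (c i) * Polynomial.X ^ (p ^ (i - m)))
            = LieAlgebra.ad F L (c i • pm^[i - m] a) := by
          intro i _
          rw [map_mul, Polynomial.aeval_C, map_pow, Polynomial.aeval_X, ← hadpm,
            map_smul, Algebra.smul_def]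
        rw [Finset.sum_congr rfl h2]
        have h9 : ∀ w : L, LieAlgebra.ad F L w = (LieAlgebra.ad F L : L →ₗ[F] Module.End F L) w :=
          fun _ => rfl
        rw [Finset.sum_congr rfl fun i _ => h9 _, h9, ← map_sum, ← map_sub, hsum0, map_zero]
      -- the eigenvalue relation
      have hbr : ⁅x₀, a⁆ - (∑ i ∈ E, c i * μ a ^ p ^ (i - m)) • x₀ ∈ S := by
        have e1 : ⁅x₀, a⁆ = ∑ i ∈ E, c i • ⁅x₀, pm^[i - m] a⁆ := by
          conv_lhs => rw [hrel]
          rw [aux_lie_sum]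
          exact Finset.sum_congr rfl fun i _ => by rw [lie_smul]
        rw [e1, Finset.sum_smul, ← Finset.sum_sub_distrib]
        refine sum_mem fun i _ => ?_
        have h3 := hμ _ (hiterS a haS (i - m))
        rw [hμiter a haS (i - m)] at h3
        have e2 : c i • ⁅x₀, pm^[i - m] a⁆ - (c i * μ a ^ p ^ (i - m)) • x₀
            = c i • (⁅x₀, pm^[i - m] a⁆ - μ a ^ p ^ (i - m) • x₀) := by
          rw [smul_sub, smul_smul]
        rw [e2]
        exact S.smul_mem _ h3
      have hμrel : (∑ i ∈ E, c i * μ a ^ p ^ (i - m)) = μ a := hval a haS _ hbr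
      -- lam is a root of f
      have hroot : f.eval lam = 0 := by
        rw [hf, Polynomial.eval_sub, Polynomial.eval_finset_sum, Polynomial.eval_X]
        have h4 : ∀ i ∈ E, (Polynomial.C (c i) * Polynomial.X ^ (p ^ (i - m))).eval lam
            = -(c i * μ a ^ p ^ (i - m)) := by
          intro i _
          rw [Polynomial.eval_mul, Polynomial.eval_C, Polynomial.eval_pow, Polynomial.eval_X,
            hlam, neg_pow]
          have h5 : ((-1 : F)) ^ p ^ (i - m) = -1 := neg_one_pow_char_pow F p (i - m)
          rw [h5]
          ring
        rw [Finset.sum_congr rfl h4, Finset.sum_neg_distrib, hμrel, hlam]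
        ring
      obtain ⟨q, hfq⟩ := Polynomial.dvd_iff_isRoot.mpr hroot
      -- the derivative of f is -1
      have hder : Polynomial.derivative f = -1 := by
        rw [hf, Polynomial.derivative_sub, Polynomial.derivative_X]
        have h6 : Polynomial.derivative (∑ i ∈ E, Polynomial.C (c i)
            * Polynomial.X ^ (p ^ (i - m))) = 0 := by
          rw [map_sum]
          refine Finset.sum_eq_zero fun i hi => ?_
          rw [Polynomial.derivative_C_mul, Polynomial.derivative_X_pow]
          have h7 : ((p ^ (i - m) : ℕ) : F) = 0 := by
            rw [Nat.cast_pow, CharP.cast_eq_zero F p, zero_pow]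
            exact Nat.sub_ne_zero_of_lt (hgt i hi)
          rw [h7]
          simp
        rw [h6, zero_sub]
      -- hence q(lam) = -1
      have hqlam : q.eval lam = -1 := by
        have hd := congrArg Polynomial.derivative hfq
        rw [hder, Polynomial.derivative_mul, Polynomial.derivative_sub,
          Polynomial.derivative_X, Polynomial.derivative_C, sub_zero, one_mul] at hd
        have h8 := congrArg (Polynomial.eval lam) hd
        simp only [Polynomial.eval_add, Polynomial.eval_mul, Polynomial.eval_sub,
          Polynomial.eval_X, Polynomial.eval_C, sub_self, zero_mul, add_zero,
          Polynomial.eval_neg, Polynomial.eval_one] at h8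
        exact h8.symm
      -- powers of ad a act on x₀ as powers of lam modulo S
      have hpowm : ∀ k : ℕ, ((LieAlgebra.ad F L a) ^ k) x₀ - lam ^ k • x₀ ∈ S := by
        intro k
        induction k with
        | zero =>
          simp only [pow_zero, Module.End.one_apply, one_smul, sub_self]
          exact zero_mem _
        | succ k ih =>
          have e3 : ((LieAlgebra.ad F L a) ^ (k + 1)) x₀ - lam ^ (k + 1) • x₀
              = ⁅a, ((LieAlgebra.ad F L a) ^ k) x₀ - lam ^ k • x₀⁆
                - lam ^ k • (⁅x₀, a⁆ - μ a • x₀) := by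
            rw [pow_succ', Module.End.mul_apply]
            have e4 : (LieAlgebra.ad F L a) (((LieAlgebra.ad F L a) ^ k) x₀)
                = ⁅a, ((LieAlgebra.ad F L a) ^ k) x₀⁆ := rfl
            rw [e4, lie_sub, lie_smul]
            have e5 : ⁅a, x₀⁆ = -⁅x₀, a⁆ := by rw [← lie_skew]
            rw [e5, pow_succ, hlam]
            module
          rw [e3]
          exact sub_mem (S.lie_mem haS ih) (S.smul_mem _ (hμ a haS))
      -- the eigenvector
      set y : L := (Polynomial.aeval (LieAlgebra.ad F L a) q) x₀ with hy
      have hqmod : y - q.eval lam • x₀ ∈ S := by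
        rw [hy, Polynomial.aeval_eq_sum_range, Polynomial.eval_eq_sum_range,
          LinearMap.sum_apply, Finset.sum_smul, ← Finset.sum_sub_distrib]
        refine sum_mem fun i _ => ?_
        rw [LinearMap.smul_apply]
        have e6 : q.coeff i • ((LieAlgebra.ad F L a) ^ i) x₀ - (q.coeff i * lam ^ i) • x₀
            = q.coeff i • (((LieAlgebra.ad F L a) ^ i) x₀ - lam ^ i • x₀) := by
          rw [smul_sub, smul_smul]
        rw [e6]
        exact S.smul_mem _ (hpowm i)
      have hyx₀ : y + x₀ ∈ S := by
        rw [hqlam] at hqmod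
        rwa [neg_smul, one_smul, sub_neg_eq_add] at hqmod
      have hynot : y ∉ S := fun hy' => hx₀ (by simpa using sub_mem hyx₀ hy')
      have heig : ⁅a, y⁆ = lam • y := by
        have e1 : Polynomial.aeval (LieAlgebra.ad F L a) f
            = (LieAlgebra.ad F L a - (algebraMap F (Module.End F L)) lam)
              * Polynomial.aeval (LieAlgebra.ad F L a) q := by
          rw [hfq, map_mul, map_sub, Polynomial.aeval_X, Polynomial.aeval_C]
        have e2 := congrArg (fun φ : Module.End F L => φ x₀) e1
        rw [heval0] at e2
        simp only [LinearMap.zero_apply, Module.End.mul_apply, LinearMap.sub_apply,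
          Module.algebraMap_end_apply] at e2
        have e7 : (LieAlgebra.ad F L a) y - lam • y = 0 := by
          rw [hy]; exact e2.symm
        have e8 : (LieAlgebra.ad F L a) y = ⁅a, y⁆ := rfl
        rw [e8] at e7
        exact sub_eq_zero.1 e7
      -- normalize
      set a' : L := (-lam⁻¹) • a with ha'
      have ha'S : a' ∈ S := S.smul_mem _ haS
      have hya' : ⁅y, a'⁆ = y := by
        have e9 : ⁅y, a⁆ = -(lam • y) := by rw [← lie_skew, heig]
        rw [ha', lie_smul, e9, smul_neg, neg_smul, neg_neg, smul_smul,
          inv_mul_cancel₀ hlamne, one_smul]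
      -- iterated brackets of y + a' with a'
      have hbk : ∀ k : ℕ, ((LieAlgebra.ad F L (y + a')) ^ (k + 1)) a' = ((-1 : F) ^ k) • y := by
        intro k
        induction k with
        | zero =>
          rw [pow_one, pow_zero, one_smul]
          show ⁅y + a', a'⁆ = y
          rw [add_lie, hya', lie_self, add_zero]
        | succ k ih =>
          have e10 : ((LieAlgebra.ad F L (y + a')) ^ (k + 2)) a'
              = (LieAlgebra.ad F L (y + a')) (((LieAlgebra.ad F L (y + a')) ^ (k + 1)) a') := by
            rw [pow_succ', Module.End.mul_apply]
          rw [e10, ih]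
          show ⁅y + a', ((-1 : F) ^ k) • y⁆ = ((-1 : F) ^ (k + 1)) • y
          have e11 : ⁅a', y⁆ = -y := by rw [← lie_skew, hya']
          rw [lie_smul, add_lie, lie_self, e11, zero_add, pow_succ]
          module
      -- the contradiction
      have hfinal : ⁅pm (y + a'), a'⁆ = y := by
        rw [hpm.ad_pow]
        obtain ⟨n, hn⟩ : ∃ n, p = n + 1 :=
          ⟨p - 1, (Nat.succ_pred_eq_of_pos (Nat.Prime.pos Fact.out)).symm⟩
        rw [hn, hbk n]
        have h1 : ((-1 : F)) ^ p = -1 := neg_one_pow_char F p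
        rw [hn, pow_succ] at h1
        have h2 : (-1 : F) ^ n * (-1) = 1 * (-1) := by rw [h1, one_mul]
        have h3 : ((-1 : F)) ^ n = 1 := mul_right_cancel₀ (neg_ne_zero.2 one_ne_zero) h2
        rw [h3, one_smul]
      exact hynot (hfinal ▸ S.lie_mem (hrange (y + a')) ha'S)
    -- conclude
    intro x y hy
    by_cases hx : x ∈ S
    · exact S.lie_mem hx hy
    · have h := hμx x hx y hy
      rw [hμzero y hy, zero_smul, sub_zero] at h
      exact h
  · -- ideal → quasi-ideal
    intro hI
    refine ⟨hSp, ?_⟩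
    intro H hH s hs h hh
    have hbr : ⁅h, s⁆ ∈ S := hI h s hs
    have h2 : ⁅s, h⁆ ∈ S.toSubmodule := by
      rw [← lie_skew]
      exact neg_mem ((LieSubalgebra.mem_toSubmodule (L' := S)).2 hbr)
    exact Submodule.mem_sup_left h2
end
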